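/- arXiv:1907.09895 — 5 statements merged into one kernel-verified Lean document; each statement's English description precedes it below -/
import Mathlib

section
/- There exists ε₀ > 0 such that for every 0 < ε < ε₀ and every y with |y| ≤ 1 + h one has u_ε(x_ε, y) ≤ −2 and u_ε(−x_ε, y) ≤ −2, where x_ε = (3 ε^{−3/2})^{1/(2k)}. -/
open Set Filter Topology

/-- The holomorphic function `F(z) = -∏ (z - xᵢ)`. -/
noncomputable def FF (k : ℕ) (x : Fin (2*k) → ℝ) (z : ℂ) : ℂ :=
  -∏ i, (z - (x i : ℂ))

/-- `v(x,y) = Re F(x + iy)`, a harmonic function. -/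
noncomputable def vv (k : ℕ) (x : Fin (2*k) → ℝ) (p : ℝ × ℝ) : ℝ :=
  (FF k x ((p.1 : ℂ) + (p.2 : ℂ) * Complex.I)).re

/-- The restriction `f` of `F` to the real line. -/
noncomputable def ff (k : ℕ) (x : Fin (2*k) → ℝ) (t : ℝ) : ℝ :=
  (FF k x (t : ℂ)).re

/-- `u_ε(x,y) = 1/2 - y²/2 + ε (y³ - 3 x² y) + ε^{3/2} v(x,y)`. -/
noncomputable def uu (k : ℕ) (x : Fin (2*k) → ℝ) (ε : ℝ) (p : ℝ × ℝ) : ℝ :=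
  1/2 - p.2^2/2 + ε * (p.2^3 - 3*p.1^2*p.2) + ε ^ ((3:ℝ)/2) * vv k x p

/-- `x_ε = (3 ε^{-3/2})^{1/(2k)}`. -/
noncomputable def xeps (k : ℕ) (ε : ℝ) : ℝ :=
  (3 * ε ^ (-(3:ℝ)/2)) ^ ((1:ℝ)/(2*k))

/-- `Ω_ε`: the connected component of `{u_ε > 0}` containing `(x₁, 0)`. -/
noncomputable def Omeg (k : ℕ) (hk : 2 ≤ k) (x : Fin (2*k) → ℝ) (ε : ℝ) : Set (ℝ × ℝ) :=
  connectedComponentIn {p : ℝ × ℝ | 0 < uu k x ε p} (x ⟨0, by omega⟩, 0)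

/-- partial derivative in the first variable. -/
noncomputable def px (g : ℝ × ℝ → ℝ) (p : ℝ × ℝ) : ℝ :=
  deriv (fun t => g (t, p.2)) p.1

/-- partial derivative in the second variable. -/
noncomputable def py (g : ℝ × ℝ → ℝ) (p : ℝ × ℝ) : ℝ :=
  deriv (fun t => g (p.1, t)) p.2

/-- `N_u = u_xx u_y² - 2 u_xy u_x u_y + u_yy u_x²`. -/
noncomputable def NN (g : ℝ × ℝ → ℝ) (p : ℝ × ℝ) : ℝ :=
  px (px g) p * (py g p)^2 - 2 * py (px g) p * px g p * py g p + py (py g) p * (px g p)^2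

/-- Oriented curvature of a level curve of `g`. -/
noncomputable def CurvU (g : ℝ × ℝ → ℝ) (p : ℝ × ℝ) : ℝ :=
  -(NN g p) / ((px g p)^2 + (py g p)^2) ^ ((3:ℝ)/2)

lemma aux_pow (δ : ℝ) (hδ : 0 ≤ δ) : ∀ n : ℕ, 2*n*δ ≤ 1 → (1+δ)^n ≤ 1 + 2*n*δ := by
  intro n
  induction n with
  | zero => simp
  | succ n ih =>
    intro hn
    push_cast at hn ⊢
    have h1 : 2*(n:ℝ)*δ ≤ 1 := by nlinarith
    have h2 := ih h1
    have hδ1 : δ ≤ 1 := by nlinarith [Nat.cast_nonneg (α := ℝ) n]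
    have he : (1+δ)^(n+1) = (1+δ)^n * (1+δ) := by ring
    rw [he]
    nlinarith [pow_nonneg (by linarith : (0:ℝ) ≤ 1+δ) n]

lemma aux_prod (δ : ℝ) (hδ : 0 ≤ δ) : ∀ (n : ℕ) (a : Fin n → ℂ),
    (∀ i, ‖a i - 1‖ ≤ δ) → ‖(∏ i, a i) - 1‖ ≤ (1+δ)^n - 1 := by
  intro n
  induction n with
  | zero => intro a _; simp
  | succ n ih =>
    intro a h
    rw [Fin.prod_univ_succ]
    have hP := ih (fun i => a i.succ) (fun i => h i.succ)
    have h0 : ‖a 0‖ ≤ 1 + δ := by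
      calc ‖a 0‖ = ‖(a 0 - 1) + 1‖ := by ring_nf
        _ ≤ ‖a 0 - 1‖ + 1 := by simpa using norm_add_le (a 0 - 1) 1
        _ ≤ 1 + δ := by linarith [h 0]
    have key : a 0 * ∏ i : Fin n, a i.succ - 1
        = a 0 * ((∏ i : Fin n, a i.succ) - 1) + (a 0 - 1) := by ring
    rw [key]
    calc ‖a 0 * ((∏ i : Fin n, a i.succ) - 1) + (a 0 - 1)‖
        ≤ ‖a 0‖ * ‖(∏ i : Fin n, a i.succ) - 1‖ + ‖a 0 - 1‖ := by
          refine le_trans (norm_add_le _ _) ?_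
          rw [norm_mul]
      _ ≤ (1+δ) * ((1+δ)^n - 1) + δ := by
          have hprod : (0:ℝ) ≤ ‖(∏ i : Fin n, a i.succ) - 1‖ := norm_nonneg _
          nlinarith [h 0, norm_nonneg (a 0)]
      _ = (1+δ)^(n+1) - 1 := by ring

set_option maxHeartbeats 1000000 in
theorem stmt2 (k : ℕ) (hk : 2 ≤ k) (x : Fin (2*k) → ℝ) (hx : StrictMono x)
    (h : ℝ) (hh : h ∈ Set.Ioo (0:ℝ) 1) :
    ∃ ε₀ > (0:ℝ), ∀ ε : ℝ, 0 < ε → ε < ε₀ → ∀ y : ℝ, |y| ≤ 1 + h →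
      uu k x ε (xeps k ε, y) ≤ -2 ∧ uu k x ε (-xeps k ε, y) ≤ -2 := by
  set M : ℝ := ∑ i, |x i| with hMdef
  have hM : 0 ≤ M := Finset.sum_nonneg (fun i _ => abs_nonneg _)
  have hMi : ∀ i, |x i| ≤ M := fun i =>
    Finset.single_le_sum (fun j _ => abs_nonneg (x j)) (Finset.mem_univ i)
  set B : ℝ := 400*(k:ℝ)*(2+M) with hBdef
  have hk2 : (2:ℝ) ≤ (k:ℝ) := by exact_mod_cast hk
  have hB1 : 1 ≤ B := by nlinarith
  have hBpow : 0 < B^(2*k) := pow_pos (by linarith) _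
  refine ⟨min (min (1/1000) ((7/300)^4)) (3 / B^(2*k)), by positivity, ?_⟩
  intro ε hε hεlt y hy
  have hε1 : ε ≤ 1/1000 := le_trans hεlt.le (le_trans (min_le_left _ _) (min_le_left _ _))
  have hε4 : ε ≤ (7/300)^4 := le_trans hεlt.le (le_trans (min_le_left _ _) (min_le_right _ _))
  have hεB : ε ≤ 3 / B^(2*k) := le_trans hεlt.le (min_le_right _ _)
  have hε1' : ε ≤ 1 := by linarith
  set a : ℝ := 3 * ε ^ (-(3:ℝ)/2) with hadef
  have hεp : 0 < ε ^ (-(3:ℝ)/2) := Real.rpow_pos_of_pos hε _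
  have ha : 0 < a := by positivity
  set s : ℝ := xeps k ε with hsdef
  have hs : 0 < s := Real.rpow_pos_of_pos ha _
  have hkr : (2*(k:ℝ)) ≠ 0 := by positivity
  -- s ^ (2k) = a
  have hpow : s ^ (2*k) = a := by
    rw [hsdef, xeps, ← Real.rpow_natCast (_ ^ ((1:ℝ)/(2*(k:ℝ)))) (2*k),
      ← Real.rpow_mul ha.le]
    rw [show ((1:ℝ)/(2*(k:ℝ))) * ((2*k : ℕ) : ℝ) = 1 by push_cast; field_simp]
    exact Real.rpow_one a
  -- ε^{3/2} * s^{2k} = 3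
  have hA : ε ^ ((3:ℝ)/2) * s ^ (2*k) = 3 := by
    rw [hpow, hadef]
    have h1 : ε ^ ((3:ℝ)/2) * ε ^ (-(3:ℝ)/2) = 1 := by
      rw [← Real.rpow_add hε]; norm_num
    calc ε ^ ((3:ℝ)/2) * (3 * ε ^ (-(3:ℝ)/2))
        = 3 * (ε ^ ((3:ℝ)/2) * ε ^ (-(3:ℝ)/2)) := by ring
      _ = 3 := by rw [h1]; ring
  -- s ≥ B
  have h32 : ε ^ ((3:ℝ)/2) ≤ ε := by
    have := Real.rpow_le_rpow_of_exponent_ge hε hε1' (by norm_num : (1:ℝ) ≤ 3/2)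
    simpa [Real.rpow_one] using this
  have hp32 : 0 < ε ^ ((3:ℝ)/2) := Real.rpow_pos_of_pos hε _
  have ha' : a = 3 / ε ^ ((3:ℝ)/2) := by
    rw [hadef, show (-(3:ℝ)/2) = -((3:ℝ)/2) by norm_num, Real.rpow_neg hε.le]
    ring
  have hage : 3/ε ≤ a := by
    rw [ha']
    exact div_le_div_of_nonneg_left (by norm_num) hp32 h32
  have hBε : B^(2*k) ≤ 3/ε := by
    rw [le_div_iff₀ hε]
    have := (le_div_iff₀ hBpow).mp hεB
    nlinarith
  have hsB : B ≤ s := by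
    refine le_of_pow_le_pow_left₀ (n := 2*k) (by omega) hs.le ?_
    rw [hpow]; linarith
  have hs1 : 1 ≤ s := le_trans hB1 hsB
  -- δ bound
  set δ : ℝ := (2+M)/s with hδdef
  have hδ0 : 0 ≤ δ := by positivity
  have hδB : δ ≤ (2+M)/B := div_le_div_of_nonneg_left (by linarith) (by linarith) hsB
  have hδsmall : 2*((2*k:ℕ):ℝ)*δ ≤ 1/100 := by
    have hval : (2+M)/B = 1/(400*(k:ℝ)) := by
      rw [hBdef]; rw [div_eq_div_iff (by nlinarith) (by positivity)]; ring
    push_cast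
    rw [hval] at hδB
    have : 2*(2*(k:ℝ))*δ ≤ 2*(2*(k:ℝ))*(1/(400*(k:ℝ))) := by
      apply mul_le_mul_of_nonneg_left hδB (by positivity)
    calc 2*(2*(k:ℝ))*δ ≤ 2*(2*(k:ℝ))*(1/(400*(k:ℝ))) := this
      _ = 1/100 := by field_simp; ring
  -- ε s² ≤ 7/100
  have hεs2 : ε * s^2 ≤ 7/100 := by
    have hs2 : s^2 = a ^ (((1:ℝ)/(2*(k:ℝ)))*2) := by
      rw [hsdef, xeps, ← Real.rpow_natCast (_ ^ ((1:ℝ)/(2*(k:ℝ)))) 2,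
        ← Real.rpow_mul ha.le]
      norm_num
    have hsplit : a ^ (((1:ℝ)/(2*(k:ℝ)))*2) =
        (3:ℝ) ^ (((1:ℝ)/(2*(k:ℝ)))*2) * ε ^ ((-(3:ℝ)/2) * (((1:ℝ)/(2*(k:ℝ)))*2)) := by
      rw [hadef, Real.mul_rpow (by norm_num) hεp.le, ← Real.rpow_mul hε.le]
    have hcomb : ε * s^2 = (3:ℝ) ^ (((1:ℝ)/(2*(k:ℝ)))*2) *
        ε ^ (1 + (-(3:ℝ)/2) * (((1:ℝ)/(2*(k:ℝ)))*2)) := by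
      rw [hs2, hsplit, Real.rpow_add hε, Real.rpow_one]
      ring
    have h3b : (3:ℝ) ^ (((1:ℝ)/(2*(k:ℝ)))*2) ≤ 3 := by
      have hle : ((1:ℝ)/(2*(k:ℝ)))*2 ≤ 1 := by
        rw [div_mul_eq_mul_div, mul_comm, div_le_one (by positivity)]
        nlinarith
      have := Real.rpow_le_rpow_of_exponent_le (by norm_num : (1:ℝ) ≤ 3) hle
      simpa [Real.rpow_one] using this
    have hexp : (1:ℝ)/4 ≤ 1 + (-(3:ℝ)/2) * (((1:ℝ)/(2*(k:ℝ)))*2) := by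
      have h1k : (1:ℝ)/(k:ℝ) ≤ 1/2 := by
        rw [div_le_div_iff₀ (by positivity) (by norm_num)]; linarith
      have : (-(3:ℝ)/2) * (((1:ℝ)/(2*(k:ℝ)))*2) = -(3/2) * (1/(k:ℝ)) := by
        field_simp
      rw [this]; nlinarith
    have hεb : ε ^ (1 + (-(3:ℝ)/2) * (((1:ℝ)/(2*(k:ℝ)))*2)) ≤ 7/300 := by
      calc ε ^ (1 + (-(3:ℝ)/2) * (((1:ℝ)/(2*(k:ℝ)))*2))
          ≤ ε ^ ((1:ℝ)/4) := Real.rpow_le_rpow_of_exponent_ge hε hε1' hexp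
        _ ≤ (((7:ℝ)/300)^4) ^ ((1:ℝ)/4) :=
            Real.rpow_le_rpow hε.le hε4 (by norm_num)
        _ = 7/300 := by
            rw [← Real.rpow_natCast ((7:ℝ)/300) 4, ← Real.rpow_mul (by norm_num)]
            norm_num
    rw [hcomb]
    have h30 : (0:ℝ) ≤ (3:ℝ) ^ (((1:ℝ)/(2*(k:ℝ)))*2) := (Real.rpow_pos_of_pos (by norm_num) _).le
    calc (3:ℝ) ^ (((1:ℝ)/(2*(k:ℝ)))*2) * ε ^ (1 + (-(3:ℝ)/2) * (((1:ℝ)/(2*(k:ℝ)))*2))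
        ≤ 3 * (7/300) := by
          apply mul_le_mul h3b hεb (Real.rpow_pos_of_pos hε _).le (by norm_num)
      _ = 7/100 := by norm_num
  -- main pointwise estimate
  have key : ∀ c : ℝ, |c| = s → uu k x ε (c, y) ≤ -2 := by
    intro c hc
    have hcne : (c:ℂ) ≠ 0 := by
      simp only [ne_eq, Complex.ofReal_eq_zero]
      intro h0; rw [h0] at hc; simp at hc; linarith
    set W : ℂ := ∏ i, ((1:ℂ) + ((y:ℂ)*Complex.I - (x i:ℂ))/(c:ℂ)) with hWdef
    have hy2 : |y| ≤ 2 := by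
      have := hh.2; rw [abs_le] at hy ⊢; constructor <;> linarith [hy.1, hy.2]
    -- each factor is close to 1
    have hfac : ∀ i : Fin (2*k), ‖((1:ℂ) + ((y:ℂ)*Complex.I - (x i:ℂ))/(c:ℂ)) - 1‖ ≤ δ := by
      intro i
      have : ((1:ℂ) + ((y:ℂ)*Complex.I - (x i:ℂ))/(c:ℂ)) - 1
          = ((y:ℂ)*Complex.I - (x i:ℂ))/(c:ℂ) := by ring
      rw [this, norm_div]
      have hnum : ‖(y:ℂ)*Complex.I - (x i:ℂ)‖ ≤ 2 + M := by
        calc ‖(y:ℂ)*Complex.I - (x i:ℂ)‖ ≤ ‖(y:ℂ)*Complex.I‖ + ‖(x i:ℂ)‖ := norm_sub_le _ _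
          _ = |y| + |x i| := by simp
          _ ≤ 2 + M := add_le_add hy2 (hMi i)
      have hden : ‖(c:ℂ)‖ = s := by rw [Complex.norm_real]; exact hc
      rw [hden, hδdef]
      gcongr
    have hW1 : ‖W - 1‖ ≤ 1/100 := by
      have h1 := aux_prod δ hδ0 (2*k) _ hfac
      have h2 := aux_pow δ hδ0 (2*k) (by push_cast at hδsmall ⊢; linarith)
      calc ‖W - 1‖ ≤ (1+δ)^(2*k) - 1 := h1
        _ ≤ 2*((2*k:ℕ):ℝ)*δ := by push_cast at h2 ⊢; linarith
        _ ≤ 1/100 := hδsmall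
    have hWre : (99:ℝ)/100 ≤ W.re := by
      have h1 : |W.re - 1| ≤ ‖W - 1‖ := by
        have := Complex.abs_re_le_norm (W - 1)
        simpa [Complex.sub_re] using this
      rw [abs_le] at h1
      linarith [h1.1]
    -- factorization
    have hfact : (∏ i, ((c:ℂ) + (y:ℂ)*Complex.I - (x i:ℂ))) = (c:ℂ)^(2*k) * W := by
      have hstep : ∀ i : Fin (2*k), ((c:ℂ) + (y:ℂ)*Complex.I - (x i:ℂ))
          = (c:ℂ) * ((1:ℂ) + ((y:ℂ)*Complex.I - (x i:ℂ))/(c:ℂ)) := by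
        intro i; field_simp; ring
      calc (∏ i, ((c:ℂ) + (y:ℂ)*Complex.I - (x i:ℂ)))
          = ∏ i, ((c:ℂ) * ((1:ℂ) + ((y:ℂ)*Complex.I - (x i:ℂ))/(c:ℂ))) :=
            Finset.prod_congr rfl (fun i _ => hstep i)
        _ = (∏ _i : Fin (2*k), (c:ℂ)) * W := Finset.prod_mul_distrib
        _ = (c:ℂ)^(2*k) * W := by
            rw [Finset.prod_const, Finset.card_univ, Fintype.card_fin]
    have hceven : c^(2*k) = s^(2*k) := by
      rw [← hc, (even_two_mul k).pow_abs]
    have hc2 : c^2 = s^2 := by rw [← hc, sq_abs]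
    have hvv : vv k x (c, y) = -(c^(2*k) * W.re) := by
      have hre : ((c:ℂ)^(2*k) * W).re = c^(2*k) * W.re := by
        rw [← Complex.ofReal_pow, Complex.re_ofReal_mul]
      simp only [vv, FF, Complex.neg_re]
      rw [show (((c,y).1 : ℝ):ℂ) = (c:ℂ) from rfl, show (((c,y).2 : ℝ):ℂ) = (y:ℂ) from rfl]
      rw [hfact, hre]
    have hT : ε ^ ((3:ℝ)/2) * vv k x (c, y) ≤ -(297/100) := by
      rw [hvv, hceven]
      have he : ε ^ ((3:ℝ)/2) * -(s^(2*k) * W.re)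
          = -((ε ^ ((3:ℝ)/2) * s^(2*k)) * W.re) := by ring
      rw [he, hA]
      linarith
    have hy' := abs_le.mp hy2
    have hy3 : y^3 ≤ 8 := by
      have h1 : y^3 ≤ |y|^3 := by
        calc y^3 ≤ |y^3| := le_abs_self _
          _ = |y|^3 := abs_pow y 3
      have h2 : |y|^3 ≤ 2^3 := pow_le_pow_left₀ (abs_nonneg y) hy2 3
      norm_num at h2
      linarith
    have h8 : ε * y^3 ≤ 8 * ε := by
      have := mul_le_mul_of_nonneg_left hy3 hε.le
      linarith
    have hcy : -(3 * ε * c^2 * y) ≤ 42/100 := by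
      have h0 : 0 ≤ ε * s^2 := by positivity
      have hny : -y ≤ 2 := by linarith [hy'.1]
      have hm1 : (ε*s^2)*(-y) ≤ (ε*s^2)*2 := mul_le_mul_of_nonneg_left hny h0
      have hm2 : (ε*s^2)*2 ≤ (7/100)*2 := mul_le_mul_of_nonneg_right hεs2 (by norm_num)
      have heq : -(3 * ε * c^2 * y) = 3*((ε*s^2)*(-y)) := by rw [hc2]; ring
      rw [heq]
      linarith
    have hexpand : ε*(y^3 - 3*c^2*y) = ε*y^3 + (-(3 * ε * c^2 * y)) := by ring
    show 1/2 - y^2/2 + ε * (y^3 - 3*c^2*y) + ε ^ ((3:ℝ)/2) * vv k x (c, y) ≤ -2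
    rw [hexpand]
    have hysq : 0 ≤ y^2 := sq_nonneg y
    linarith [hT, h8, hcy, hε1]
  have habs1 : |s| = s := abs_of_pos hs
  have habs2 : |-s| = s := by rw [abs_neg]; exact habs1
  exact ⟨key s habs1, key (-s) habs2⟩
end

section
/- There exists ε₀ > 0 such that for every 0 < ε < ε₀ and every x ∈ [−x_ε, x_ε] one has u_ε(x, 1+h) < −h²/2 and u_ε(x, −(1+h)) < −h²/2; in particular u_ε is strictly negative on the two horizontal sides of the rectangle R_ε. -/
set_option maxHeartbeats 1000000

open Set Filter Topology

/-! ### Auxiliary lemmas -/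

lemma prod_dev {ι : Type*} (s : Finset ι) (w : ι → ℂ) :
    ‖(∏ i ∈ s, (1 + w i)) - 1‖ ≤ (∏ i ∈ s, (1 + ‖w i‖)) - 1 := by
  classical
  induction s using Finset.induction_on with
  | empty => simp
  | @insert a s ha ih =>
    rw [Finset.prod_insert ha, Finset.prod_insert ha]
    have key : (1 + w a) * (∏ i ∈ s, (1 + w i)) - 1
        = (1 + w a) * ((∏ i ∈ s, (1 + w i)) - 1) + w a := by ring
    rw [key]
    have h1 := norm_add_le ((1 + w a) * ((∏ i ∈ s, (1 + w i)) - 1)) (w a)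
    rw [norm_mul] at h1
    have h2 : ‖1 + w a‖ ≤ 1 + ‖w a‖ := by
      refine (norm_add_le _ _).trans ?_
      simp
    have h3 : (0:ℝ) ≤ ‖(∏ i ∈ s, (1 + w i)) - 1‖ := norm_nonneg _
    have h4 : (0:ℝ) ≤ ‖w a‖ := norm_nonneg _
    have h5 : (1:ℝ) ≤ ∏ i ∈ s, (1 + ‖w i‖) := by
      calc (1:ℝ) = ∏ _i ∈ s, (1:ℝ) := by simp
        _ ≤ ∏ i ∈ s, (1 + ‖w i‖) :=
            Finset.prod_le_prod (fun i _ => zero_le_one)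
              (fun i _ => by linarith [norm_nonneg (w i)])
    nlinarith [ih]

lemma pow_aux (n : ℕ) (hn : 0 < n) : ((1:ℝ) + 1/(4*n))^n ≤ 2 := by
  have hn' : (0:ℝ) < n := by exact_mod_cast hn
  set δ : ℝ := 1/(4*n) with hδ
  have hδ0 : 0 < δ := by positivity
  have h1n : (1:ℝ) ≤ n := by exact_mod_cast hn
  have hδn : (n:ℝ) * δ = 1/4 := by
    rw [hδ]
    field_simp
  have hδ4 : δ ≤ 1/4 := by
    rw [hδ]
    rw [div_le_div_iff₀ (by positivity) (by norm_num)]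
    nlinarith
  have h1 : (1:ℝ) - (n:ℝ)*δ ≤ (1 - δ)^n := by
    have := one_add_mul_le_pow (a := -δ) (by nlinarith) n
    have e : (1 + -δ) = 1 - δ := by ring
    rw [e] at this
    nlinarith
  have h2 : ((1+δ)*(1-δ))^n ≤ 1 := by
    apply pow_le_one₀ <;> nlinarith
  rw [mul_pow] at h2
  have h3 : (0:ℝ) ≤ (1+δ)^n := by positivity
  nlinarith

lemma re_prod_nonneg (n : ℕ) (hn : 0 < n) (t : Fin n → ℝ) (y : ℝ) (hy : y ≠ 0)
    (hprod : 0 ≤ ∏ i, t i) (ht : ∀ i, 4 * n * |y| ≤ |t i|) :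
    0 ≤ (∏ i, ((t i : ℂ) + (y:ℂ) * Complex.I)).re := by
  have hy0 : 0 < |y| := abs_pos.mpr hy
  have hn' : (0:ℝ) < n := by exact_mod_cast hn
  have htpos : ∀ i, 0 < |t i| := by
    intro i
    have := ht i
    nlinarith
  have ht0 : ∀ i, t i ≠ 0 := fun i => abs_pos.mp (htpos i)
  set w : Fin n → ℂ := fun i => ((y / t i : ℝ) : ℂ) * Complex.I with hw
  have hfac : ∀ i, ((t i : ℂ) + (y:ℂ) * Complex.I) = (t i : ℂ) * (1 + w i) := by
    intro i
    have h0 : (t i : ℂ) ≠ 0 := Complex.ofReal_ne_zero.mpr (ht0 i)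
    rw [hw]
    push_cast
    field_simp
  rw [Finset.prod_congr rfl (fun i _ => hfac i), Finset.prod_mul_distrib]
  have hcast : (∏ i, ((t i : ℂ))) = ((∏ i, t i : ℝ) : ℂ) := by push_cast; rfl
  rw [hcast, Complex.re_ofReal_mul]
  apply mul_nonneg hprod
  have habsw : ∀ i, ‖w i‖ ≤ 1/(4*n) := by
    intro i
    rw [hw]
    simp only [norm_mul, Complex.norm_I, Complex.norm_real, Real.norm_eq_abs, mul_one, abs_div]
    rw [div_le_div_iff₀ (htpos i) (by positivity)]
    have := ht i
    nlinarith
  have hQ : (∏ i, (1 + ‖w i‖)) ≤ 2 := by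
    calc ∏ i, (1 + ‖w i‖) ≤ ∏ _i : Fin n, ((1:ℝ) + 1/(4*n)) := by
          apply Finset.prod_le_prod
          · intro i _; positivity
          · intro i _; linarith [habsw i]
      _ = ((1:ℝ) + 1/(4*n))^n := by rw [Finset.prod_const, Finset.card_univ, Fintype.card_fin]
      _ ≤ 2 := pow_aux n hn
  have hdev := prod_dev (Finset.univ) w
  have habs := Complex.abs_re_le_norm ((∏ i, (1 + w i)) - 1)
  have hre1 : ((∏ i, (1 + w i)) - 1).re = (∏ i, (1 + w i)).re - 1 := by simp
  rw [hre1] at habs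
  have := abs_le.mp (habs.trans hdev)
  linarith [this.1]

lemma vv_eq (k : ℕ) (x : Fin (2*k) → ℝ) (a y : ℝ) :
    vv k x (a, y) = -(∏ i, (((a - x i : ℝ) : ℂ) + (y:ℂ) * Complex.I)).re := by
  unfold vv FF
  have e : (∏ i, (((a:ℝ):ℂ) + ((y:ℝ):ℂ) * Complex.I - (x i : ℂ)))
      = ∏ i, (((a - x i : ℝ) : ℂ) + (y:ℂ) * Complex.I) := by
    apply Finset.prod_congr rfl
    intro i _
    push_cast
    ring
  simp only [Complex.neg_re]
  rw [e]

lemma vv_nonpos (k : ℕ) (hk : 2 ≤ k) (x : Fin (2*k) → ℝ) (M : ℝ)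
    (hM : ∀ i, |x i| ≤ M) (a y : ℝ) (hy1 : 1 ≤ |y|) (hy2 : |y| ≤ 2)
    (ha : M + 16*k ≤ |a|) : vv k x (a, y) ≤ 0 := by
  have hn : 0 < 2*k := by omega
  have hk' : (2:ℝ) ≤ k := by exact_mod_cast hk
  have hy0 : y ≠ 0 := by intro h0; rw [h0, abs_zero] at hy1; linarith
  have hti : ∀ i, 16*(k:ℝ) ≤ |a - x i| := by
    intro i
    have h1 := abs_sub_abs_le_abs_sub a (x i)
    have h2 := hM i
    linarith
  have key : 0 ≤ (∏ i, (((a - x i : ℝ) : ℂ) + (y:ℂ) * Complex.I)).re := by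
    apply re_prod_nonneg (2*k) hn _ y hy0
    · rcases le_or_gt 0 a with hpos | hneg
      · apply Finset.prod_nonneg
        intro i _
        have h2 := (abs_le.mp (hM i)).2
        rw [abs_of_nonneg hpos] at ha
        nlinarith
      · have hneg' : a ≤ -(M + 16*k) := by
          rw [abs_of_neg hneg] at ha
          linarith
        have e : (∏ i, (a - x i)) = ∏ i, (x i - a) := by
          calc (∏ i, (a - x i)) = ∏ i, ((-1) * (x i - a)) := by
                apply Finset.prod_congr rfl; intro i _; ring
            _ = (-1:ℝ)^(2*k) * ∏ i, (x i - a) := by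
                rw [Finset.prod_mul_distrib, Finset.prod_const, Finset.card_univ,
                  Fintype.card_fin]
            _ = ∏ i, (x i - a) := by rw [pow_mul]; norm_num
        rw [e]
        apply Finset.prod_nonneg
        intro i _
        have h2 := (abs_le.mp (hM i)).1
        nlinarith
    · intro i
      have := hti i
      push_cast
      nlinarith
  rw [vv_eq]
  linarith

lemma vv_abs_le (k : ℕ) (x : Fin (2*k) → ℝ) (M : ℝ) (hM : ∀ i, |x i| ≤ M)
    (a y : ℝ) : |vv k x (a, y)| ≤ (|a| + |y| + M)^(2*k) := by
  have h1 : |vv k x (a, y)| ≤ ‖FF k x (((a:ℝ):ℂ) + ((y:ℝ):ℂ) * Complex.I)‖ := by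
    unfold vv
    exact Complex.abs_re_le_norm _
  refine h1.trans ?_
  unfold FF
  rw [norm_neg, norm_prod]
  calc ∏ i, ‖(a:ℂ) + (y:ℂ) * Complex.I - (x i : ℂ)‖
      ≤ ∏ _i : Fin (2*k), (|a| + |y| + M) := by
        apply Finset.prod_le_prod
        · intro i _; exact norm_nonneg _
        · intro i _
          have e : ((a:ℂ) + (y:ℂ) * Complex.I - (x i : ℂ))
              = (((a - x i : ℝ)):ℂ) + ((y:ℝ):ℂ) * Complex.I := by push_cast; ring
          rw [e]
          refine (Complex.norm_le_abs_re_add_abs_im _).trans ?_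
          have hre : ((((a - x i : ℝ)):ℂ) + ((y:ℝ):ℂ) * Complex.I).re = a - x i := by simp
          have him : ((((a - x i : ℝ)):ℂ) + ((y:ℝ):ℂ) * Complex.I).im = y := by simp
          rw [hre, him]
          have := hM i
          have h4 : |a - x i| ≤ |a| + |x i| := abs_sub a (x i)
          linarith
    _ = (|a| + |y| + M)^(2*k) := by
        rw [Finset.prod_const, Finset.card_univ, Fintype.card_fin]

theorem stmt3 (k : ℕ) (hk : 2 ≤ k) (x : Fin (2*k) → ℝ) (hx : StrictMono x)
    (h : ℝ) (hh : h ∈ Set.Ioo (0:ℝ) 1) :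
    ∃ ε₀ > (0:ℝ), ∀ ε : ℝ, 0 < ε → ε < ε₀ →
      ∀ a ∈ Set.Icc (-(xeps k ε)) (xeps k ε),
        uu k x ε (a, 1 + h) < -(h^2/2) ∧ uu k x ε (a, -(1 + h)) < -(h^2/2) := by
  obtain ⟨hh0, hh1⟩ := hh
  have hk' : (2:ℝ) ≤ k := by exact_mod_cast hk
  set M : ℝ := ∑ i, |x i| with hMdef
  have hM : ∀ i, |x i| ≤ M := fun i =>
    Finset.single_le_sum (f := fun j => |x j|) (fun j _ => abs_nonneg _) (Finset.mem_univ i)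
  have hM0 : 0 ≤ M := Finset.sum_nonneg fun i _ => abs_nonneg _
  set A : ℝ := M + 16*k with hA
  have hA0 : 0 < A := by rw [hA]; nlinarith
  set C : ℝ := (A + 2 + M)^(2*k) with hC
  have hC0 : 0 ≤ C := by rw [hC]; positivity
  refine ⟨min 1 ((h/(21+C))^4), by positivity, ?_⟩
  intro ε hε hεlt a ha
  have hε1 : ε ≤ 1 := le_of_lt (lt_of_lt_of_le hεlt (min_le_left _ _))
  set q : ℝ := ε ^ ((1:ℝ)/4) with hq
  have hq0 : 0 < q := Real.rpow_pos_of_pos hε _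
  have h21C : (0:ℝ) < 21 + C := by linarith
  have hqlt : (21 + C) * q < h := by
    have h1 : ε < (h/(21+C))^4 := lt_of_lt_of_le hεlt (min_le_right _ _)
    have h2 : q < ((h/(21+C))^4) ^ ((1:ℝ)/4) :=
      Real.rpow_lt_rpow (le_of_lt hε) h1 (by norm_num)
    have h3 : (((h/(21+C))^4 : ℝ)) ^ ((1:ℝ)/4) = h/(21+C) := by
      have hb : (0:ℝ) ≤ h/(21+C) := by positivity
      rw [← Real.rpow_natCast (h/(21+C)) 4, ← Real.rpow_mul hb]
      norm_num
    rw [h3] at h2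
    rw [lt_div_iff₀ h21C] at h2
    nlinarith
  have hεq : ε ≤ q := by
    calc ε = ε ^ (1:ℝ) := (Real.rpow_one ε).symm
      _ ≤ ε ^ ((1:ℝ)/4) := Real.rpow_le_rpow_of_exponent_ge hε hε1 (by norm_num)
  have hE : ε ^ ((3:ℝ)/2) ≤ q := Real.rpow_le_rpow_of_exponent_ge hε hε1 (by norm_num)
  have hEpos : 0 < ε ^ ((3:ℝ)/2) := Real.rpow_pos_of_pos hε _
  -- bound on ε * xeps²
  have hb0 : (0:ℝ) < 3 * ε ^ (-(3:ℝ)/2) := by positivity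
  have hk0 : (k:ℝ) ≠ 0 := by positivity
  have hxsq : (xeps k ε)^2 = 3 ^ ((1:ℝ)/k) * ε ^ (-(3:ℝ)/(2*k)) := by
    unfold xeps
    rw [← Real.rpow_natCast ((3 * ε ^ (-(3:ℝ)/2)) ^ ((1:ℝ)/(2*(k:ℝ)))) 2,
        ← Real.rpow_mul hb0.le]
    have e1 : (1:ℝ)/(2*(k:ℝ)) * ((2:ℕ):ℝ) = (1:ℝ)/(k:ℝ) := by
      push_cast
      field_simp
    rw [e1, Real.mul_rpow (by norm_num) (Real.rpow_nonneg hε.le _),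
        ← Real.rpow_mul hε.le]
    congr 2
    field_simp
  have hsplit : ε ^ ((1:ℝ) - 3/(2*(k:ℝ))) = ε * ε ^ (-(3:ℝ)/(2*(k:ℝ))) := by
    rw [show ((1:ℝ) - 3/(2*(k:ℝ))) = 1 + (-(3:ℝ)/(2*(k:ℝ))) by ring,
        Real.rpow_add hε, Real.rpow_one]
  have h3k : (3:ℝ) ^ ((1:ℝ)/(k:ℝ)) ≤ 2 := by
    have hkk : (1:ℝ)/(k:ℝ) ≤ (1:ℝ)/2 := by
      rw [div_le_div_iff₀ (by linarith) (by norm_num)]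
      linarith
    have h1 : (3:ℝ) ^ ((1:ℝ)/(k:ℝ)) ≤ 3 ^ ((1:ℝ)/2) :=
      Real.rpow_le_rpow_of_exponent_le (by norm_num) hkk
    have h2 : ((3:ℝ) ^ ((1:ℝ)/2))^2 = 3 := by
      rw [← Real.rpow_natCast ((3:ℝ) ^ ((1:ℝ)/2)) 2, ← Real.rpow_mul (by norm_num : (0:ℝ) ≤ 3)]
      norm_num
    have h4 : (0:ℝ) ≤ (3:ℝ) ^ ((1:ℝ)/2) := Real.rpow_nonneg (by norm_num) _
    nlinarith [sq_nonneg ((3:ℝ) ^ ((1:ℝ)/2) - 2)]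
  have hexp : ε ^ ((1:ℝ) - 3/(2*(k:ℝ))) ≤ q :=
    Real.rpow_le_rpow_of_exponent_ge hε hε1 (by
      have h34 : (3:ℝ)/(2*(k:ℝ)) ≤ 3/4 := by
        rw [div_le_div_iff₀ (by linarith) (by norm_num)]
        linarith
      linarith)
  have hxe : ε * (xeps k ε)^2 ≤ 2 * q := by
    rw [hxsq, show ε * (3 ^ ((1:ℝ)/(k:ℝ)) * ε ^ (-(3:ℝ)/(2*(k:ℝ))))
        = 3 ^ ((1:ℝ)/(k:ℝ)) * (ε * ε ^ (-(3:ℝ)/(2*(k:ℝ)))) by ring, ← hsplit]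
    have h5 : (0:ℝ) ≤ ε ^ ((1:ℝ) - 3/(2*(k:ℝ))) := Real.rpow_nonneg hε.le _
    nlinarith
  have ha2 : a^2 ≤ (xeps k ε)^2 := sq_le_sq' ha.1 ha.2
  have haxe : 3 * ε * a^2 * (1+h) ≤ 12 * q := by
    have h1 : ε * a^2 ≤ ε * (xeps k ε)^2 := mul_le_mul_of_nonneg_left ha2 hε.le
    have h2 : ε * a^2 ≤ 2*q := h1.trans hxe
    have h4 : (0:ℝ) ≤ ε * a^2 := mul_nonneg hε.le (sq_nonneg a)
    calc 3 * ε * a^2 * (1+h) = (3 * (ε * a^2)) * (1+h) := by ring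
      _ ≤ (3 * (2*q)) * 2 := by
          apply mul_le_mul (by linarith) (by linarith) (by linarith) (by positivity)
      _ = 12 * q := by ring
  clear hxsq hsplit hexp h3k hxe hb0 ha2
  -- bound on the v term
  have hvb : ∀ y : ℝ, |y| = 1 + h → ε ^ ((3:ℝ)/2) * vv k x (a, y) ≤ C * q := by
    intro y hy
    rcases le_or_gt |a| A with hcase | hcase
    · have h1 := vv_abs_le k x M hM a y
      have h2 : (|a| + |y| + M)^(2*k) ≤ C := by
        rw [hC]
        apply pow_le_pow_left₀ (by positivity)
        rw [hy]
        linarith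
      have h3 : vv k x (a, y) ≤ C := le_trans (le_abs_self _) (h1.trans h2)
      calc ε ^ ((3:ℝ)/2) * vv k x (a, y) ≤ ε ^ ((3:ℝ)/2) * C :=
            mul_le_mul_of_nonneg_left h3 hEpos.le
        _ ≤ q * C := mul_le_mul_of_nonneg_right hE hC0
        _ = C * q := mul_comm _ _
    · have hvn : vv k x (a, y) ≤ 0 := by
        apply vv_nonpos k hk x M hM a y
        · rw [hy]; linarith
        · rw [hy]; linarith
        · rw [← hA]; linarith
      nlinarith
  have hε3 : ε * (1+h)^3 ≤ 8 * q := by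
    have hle2 : (1+h) ≤ 2 := by linarith
    have h8 : (1+h)^3 ≤ 8 := by
      calc (1+h)^3 ≤ 2^3 := pow_le_pow_left₀ (by linarith) hle2 3
        _ = 8 := by norm_num
    calc ε * (1+h)^3 ≤ q * 8 := mul_le_mul hεq h8 (by positivity) hq0.le
      _ = 8 * q := by ring
  have hv1 := hvb (1+h) (abs_of_pos (by linarith))
  have hv2 := hvb (-(1+h)) (by rw [abs_neg]; exact abs_of_pos (by linarith))
  have hu1 : uu k x ε (a, 1+h) = 1/2 - (1+h)^2/2 + ε * ((1+h)^3 - 3*a^2*(1+h))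
      + ε ^ ((3:ℝ)/2) * vv k x (a, 1+h) := rfl
  have hu2 : uu k x ε (a, -(1+h)) = 1/2 - (-(1+h))^2/2 + ε * ((-(1+h))^3 - 3*a^2*(-(1+h)))
      + ε ^ ((3:ℝ)/2) * vv k x (a, -(1+h)) := rfl
  constructor
  · rw [hu1]
    nlinarith [mul_nonneg (mul_nonneg (mul_nonneg (by norm_num : (0:ℝ) ≤ 3) hε.le)
      (sq_nonneg a)) (by linarith : (0:ℝ) ≤ 1 + h)]
  · rw [hu2]
    nlinarith [mul_nonneg hε.le (by positivity : (0:ℝ) ≤ (1+h)^3)]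
end

section
/- There exists ε₀ > 0 such that for every 0 < ε < ε₀ and every point (x,y) ∈ R_ε with u_ε(x,y) = 0 one has (x − x₁) ∂u_ε/∂x (x,y) + y ∂u_ε/∂y (x,y) ≤ −1/2. -/
open Set Filter Topology

section AUX
open Polynomial

noncomputable def Fpoly (k : ℕ) (x : Fin (2*k) → ℝ) : Polynomial ℂ :=
  -∏ i, (X - C (x i : ℂ))

lemma FF_eval (k : ℕ) (x : Fin (2*k) → ℝ) (z : ℂ) : FF k x z = (Fpoly k x).eval z := by
  simp [FF, Fpoly, eval_prod]

lemma hasDerivAt_FF (k : ℕ) (x : Fin (2*k) → ℝ) (z : ℂ) :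
    HasDerivAt (FF k x) ((derivative (Fpoly k x)).eval z) z := by
  have h := (Fpoly k x).hasDerivAt z
  have : FF k x = fun w => (Fpoly k x).eval w := funext (FF_eval k x)
  rw [this]
  exact h

lemma px_uu (k : ℕ) (x : Fin (2*k) → ℝ) (ε : ℝ) (p : ℝ × ℝ) :
    px (uu k x ε) p = ε * (-6*p.1*p.2)
      + ε ^ ((3:ℝ)/2) * ((derivative (Fpoly k x)).eval ((p.1:ℂ) + (p.2:ℂ)*Complex.I)).re := by
  have hv : HasDerivAt (fun t : ℝ => vv k x (t, p.2))
      (((derivative (Fpoly k x)).eval ((p.1:ℂ) + (p.2:ℂ)*Complex.I)).re) p.1 := by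
    have hadd : HasDerivAt (fun z : ℂ => z + (p.2:ℂ)*Complex.I) 1 (p.1:ℂ) :=
      (hasDerivAt_id _).add_const _
    have h1 : HasDerivAt (fun z : ℂ => FF k x (z + (p.2:ℂ)*Complex.I))
        ((derivative (Fpoly k x)).eval ((p.1:ℂ) + (p.2:ℂ)*Complex.I)) (p.1:ℂ) := by
      exact ((hasDerivAt_FF k x ((p.1:ℂ) + (p.2:ℂ)*Complex.I)).comp (p.1:ℂ) hadd).congr_deriv (mul_one _)
    have h2 := h1.comp_ofReal
    have h3 := Complex.reCLM.hasFDerivAt.comp_hasDerivAt p.1 h2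
    exact h3.congr_deriv (by simp)
  have hq : HasDerivAt (fun t : ℝ => 1/2 - p.2^2/2 + ε * (p.2^3 - 3*t^2*p.2))
      (ε * (-6*p.1*p.2)) p.1 := by
    have h2 : HasDerivAt (fun t : ℝ => t^2) (2*p.1) p.1 := by
      simpa using hasDerivAt_pow 2 p.1
    have h4 := ((((h2.const_mul (3:ℝ)).mul_const p.2).const_sub (p.2^3)).const_mul ε).const_add
        (1/2 - p.2^2/2 : ℝ)
    exact h4.congr_deriv (by ring)
  have hmain := hq.add (hv.const_mul (ε ^ ((3:ℝ)/2)))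
  have : px (uu k x ε) p = deriv (fun t => uu k x ε (t, p.2)) p.1 := rfl
  rw [this]
  have huu : (fun t => uu k x ε (t, p.2))
      = fun t : ℝ => (1/2 - p.2^2/2 + ε * (p.2^3 - 3*t^2*p.2))
          + ε ^ ((3:ℝ)/2) * vv k x (t, p.2) := rfl
  rw [huu]; exact hmain.deriv

lemma py_uu (k : ℕ) (x : Fin (2*k) → ℝ) (ε : ℝ) (p : ℝ × ℝ) :
    py (uu k x ε) p = -p.2 + ε * (3*p.2^2 - 3*p.1^2)
      + ε ^ ((3:ℝ)/2) * (((derivative (Fpoly k x)).eval ((p.1:ℂ) + (p.2:ℂ)*Complex.I)) * Complex.I).re := by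
  have hv : HasDerivAt (fun t : ℝ => vv k x (p.1, t))
      ((((derivative (Fpoly k x)).eval ((p.1:ℂ) + (p.2:ℂ)*Complex.I)) * Complex.I).re) p.2 := by
    have hadd : HasDerivAt (fun z : ℂ => (p.1:ℂ) + z*Complex.I) Complex.I (p.2:ℂ) := by
      simpa using ((hasDerivAt_id (p.2:ℂ)).mul_const Complex.I).const_add (p.1:ℂ)
    have h1 : HasDerivAt (fun z : ℂ => FF k x ((p.1:ℂ) + z*Complex.I))
        (((derivative (Fpoly k x)).eval ((p.1:ℂ) + (p.2:ℂ)*Complex.I)) * Complex.I) (p.2:ℂ) := by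
      exact HasDerivAt.comp (h₂ := FF k x) (p.2:ℂ) (hasDerivAt_FF k x ((p.1:ℂ) + (p.2:ℂ)*Complex.I)) hadd
    have h2 := h1.comp_ofReal
    have h3 := Complex.reCLM.hasFDerivAt.comp_hasDerivAt p.2 h2
    exact h3.congr_deriv (by simp)
  have hq : HasDerivAt (fun t : ℝ => 1/2 - t^2/2 + ε * (t^3 - 3*p.1^2*t))
      (-p.2 + ε * (3*p.2^2 - 3*p.1^2)) p.2 := by
    have h2 : HasDerivAt (fun t : ℝ => t^2) (2*p.2) p.2 := by
      simpa using hasDerivAt_pow 2 p.2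
    have h3 : HasDerivAt (fun t : ℝ => t^3) (3*p.2^2) p.2 := by
      simpa using hasDerivAt_pow 3 p.2
    have h4 := ((h2.div_const 2).const_sub (1/2)).add
        ((h3.sub ((hasDerivAt_id p.2).const_mul (3*p.1^2))).const_mul ε)
    exact h4.congr_deriv (by ring)
  have hmain := hq.add (hv.const_mul (ε ^ ((3:ℝ)/2)))
  have : py (uu k x ε) p = deriv (fun t => uu k x ε (p.1, t)) p.2 := rfl
  rw [this]
  have huu : (fun t => uu k x ε (p.1, t))
      = fun t : ℝ => (1/2 - t^2/2 + ε * (t^3 - 3*p.1^2*t))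
          + ε ^ ((3:ℝ)/2) * vv k x (p.1, t) := rfl
  rw [huu]; exact hmain.deriv


noncomputable def Ppoly (k : ℕ) (x : Fin (2*k) → ℝ) (x1 : ℝ) : Polynomial ℂ :=
  (X - C (x1:ℂ)) * derivative (Fpoly k x) - C 2 * Fpoly k x
noncomputable def Qpoly (k : ℕ) (x : Fin (2*k) → ℝ) (x1 : ℝ) : Polynomial ℂ :=
  Ppoly k x x1 + C ((2*k:ℂ) - 2) * X^(2*k)

lemma monic_Pi (k : ℕ) (x : Fin (2*k) → ℝ) : (∏ i, (X - C (x i : ℂ))).Monic :=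
  monic_prod_of_monic _ _ (fun i _ => monic_X_sub_C _)

lemma natDegree_Pi (k : ℕ) (x : Fin (2*k) → ℝ) : (∏ i, (X - C (x i : ℂ))).natDegree = 2*k := by
  rw [natDegree_prod_of_monic _ _ (fun i _ => monic_X_sub_C _)]
  simp

lemma natDegree_Fpoly (k : ℕ) (x : Fin (2*k) → ℝ) : (Fpoly k x).natDegree = 2*k := by
  rw [Fpoly, natDegree_neg, natDegree_Pi]

lemma coeff_Fpoly (k : ℕ) (x : Fin (2*k) → ℝ) : (Fpoly k x).coeff (2*k) = -1 := by
  have h := (monic_Pi k x).coeff_natDegree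
  rw [natDegree_Pi] at h
  rw [Fpoly, coeff_neg, h]

lemma natDegree_Qpoly (k : ℕ) (x : Fin (2*k) → ℝ) (x1 : ℝ) (hk : 1 ≤ k) :
    (Qpoly k x x1).natDegree ≤ 2*k := by
  have h1 : ((X - C (x1:ℂ)) * derivative (Fpoly k x)).natDegree ≤ 2*k := by
    refine le_trans natDegree_mul_le ?_
    have e1 : (X - C (x1:ℂ)).natDegree = 1 := natDegree_X_sub_C _
    have e2 : (derivative (Fpoly k x)).natDegree ≤ 2*k - 1 :=
      (natDegree_derivative_le _).trans (by rw [natDegree_Fpoly])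
    omega
  have h2 : (C (2:ℂ) * Fpoly k x).natDegree ≤ 2*k :=
    le_trans (natDegree_C_mul_le _ _) (le_of_eq (natDegree_Fpoly k x))
  have h3 : (C ((2*k:ℂ) - 2) * X^(2*k)).natDegree ≤ 2*k :=
    le_trans (natDegree_C_mul_le _ _) (le_of_eq (natDegree_X_pow _))
  refine le_trans (natDegree_add_le _ _) (max_le ?_ h3)
  exact le_trans (natDegree_sub_le _ _) (max_le h1 h2)

lemma coeff_Qpoly (k : ℕ) (x : Fin (2*k) → ℝ) (x1 : ℝ) (hk : 1 ≤ k) :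
    (Qpoly k x x1).coeff (2*k) = 0 := by
  have hcast : ((2*k-1:ℕ):ℂ) = 2*(k:ℂ) - 1 := by
    rw [Nat.cast_sub (show 1 ≤ 2*k by omega)]; push_cast; ring
  have hd1 : (derivative (Fpoly k x)).coeff (2*k-1) = -(2*(k:ℂ)) := by
    rw [coeff_derivative]
    have e : 2*k - 1 + 1 = 2*k := by omega
    rw [e, coeff_Fpoly, hcast]
    ring
  have hd2 : (derivative (Fpoly k x)).coeff (2*k) = 0 := by
    apply coeff_eq_zero_of_natDegree_lt
    have := (natDegree_derivative_le (Fpoly k x)).trans (le_of_eq (by rw [natDegree_Fpoly]))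
    omega
  have hx : ((X - C (x1:ℂ)) * derivative (Fpoly k x)).coeff (2*k) = -(2*(k:ℂ)) := by
    rw [sub_mul, coeff_sub]
    have h1 : (X * derivative (Fpoly k x)).coeff (2*k) = (derivative (Fpoly k x)).coeff (2*k-1) := by
      have e : 2*k = (2*k-1) + 1 := by omega
      rw [e, coeff_X_mul]
      congr 1
    rw [h1, hd1, coeff_C_mul, hd2]
    ring
  rw [Qpoly, coeff_add, Ppoly, coeff_sub, hx, coeff_C_mul, coeff_Fpoly, coeff_C_mul, coeff_X_pow]
  simp

lemma norm_le_of_mem (a b : ℝ) (hb : |b| ≤ 2) : ‖(a:ℂ) + b*Complex.I‖ ≤ |a| + 2 := by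
  refine le_trans (norm_add_le _ _) ?_
  have h1 : ‖(a:ℂ)‖ = |a| := by simp
  have h2 : ‖(b:ℂ)*Complex.I‖ = |b| := by simp
  rw [h1, h2]; linarith

lemma re_pow_lower (k : ℕ) (hk : 1 ≤ k) (a b : ℝ) (hb : |b| ≤ 2) :
    -(2*(2*k)*(|a|+2)^(2*k-1)) ≤ (((a:ℂ) + b*Complex.I)^(2*k)).re := by
  set z : ℂ := (a:ℂ) + b*Complex.I with hz
  have hnz : ‖z‖ ≤ |a| + 2 := norm_le_of_mem a b hb
  have key : ‖z^(2*k) - ((a:ℂ))^(2*k)‖ ≤ 2*(2*k)*(|a|+2)^(2*k-1) := by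
    rw [← geom_sum₂_mul z (a:ℂ) (2*k), norm_mul]
    have hza : ‖z - (a:ℂ)‖ ≤ 2 := by
      have : z - (a:ℂ) = (b:ℂ)*Complex.I := by rw [hz]; ring
      rw [this]; simpa using hb
    have hsum : ‖∑ i ∈ Finset.range (2*k), z^i * ((a:ℂ))^(2*k-1-i)‖
        ≤ (2*k) * (|a|+2)^(2*k-1) := by
      refine le_trans (norm_sum_le _ _) ?_
      have hterm : ∀ i ∈ Finset.range (2*k), ‖z^i * ((a:ℂ))^(2*k-1-i)‖ ≤ (|a|+2)^(2*k-1) := by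
        intro i hi
        rw [norm_mul, norm_pow, norm_pow]
        have h1 : ‖z‖^i ≤ (|a|+2)^i := by
          apply pow_le_pow_left₀ (norm_nonneg _) hnz
        have h2 : ‖(a:ℂ)‖^(2*k-1-i) ≤ (|a|+2)^(2*k-1-i) := by
          apply pow_le_pow_left₀ (norm_nonneg _)
          simp
        have h3 : (0:ℝ) ≤ |a| + 2 := by linarith [abs_nonneg a]
        calc ‖z‖^i * ‖(a:ℂ)‖^(2*k-1-i) ≤ (|a|+2)^i * (|a|+2)^(2*k-1-i) := by
              apply mul_le_mul h1 h2 (by positivity) (by positivity)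
          _ = (|a|+2)^(2*k-1) := by
              rw [← pow_add]
              congr 1
              have := Finset.mem_range.mp hi
              omega
      calc ∑ i ∈ Finset.range (2*k), ‖z^i * ((a:ℂ))^(2*k-1-i)‖
          ≤ ∑ _i ∈ Finset.range (2*k), (|a|+2)^(2*k-1) := Finset.sum_le_sum hterm
        _ = (2*k) * (|a|+2)^(2*k-1) := by
            rw [Finset.sum_const, Finset.card_range]; push_cast; ring
    calc ‖∑ i ∈ Finset.range (2*k), z^i * ((a:ℂ))^(2*k-1-i)‖ * ‖z - (a:ℂ)‖
        ≤ ((2*k) * (|a|+2)^(2*k-1)) * 2 := by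
          apply mul_le_mul hsum hza (norm_nonneg _) (by positivity)
      _ = 2*(2*k)*(|a|+2)^(2*k-1) := by ring
  have hre : (z^(2*k)).re = a^(2*k) + (z^(2*k) - ((a:ℂ))^(2*k)).re := by
    have e : (((a:ℂ))^(2*k)).re = a^(2*k) := by rw [show ((a:ℂ))^(2*k) = ((a^(2*k):ℝ):ℂ) from (Complex.ofReal_pow a (2*k)).symm ▸ rfl, Complex.ofReal_re]
    rw [Complex.sub_re, e]; ring
  have hlow : -‖z^(2*k) - ((a:ℂ))^(2*k)‖ ≤ (z^(2*k) - ((a:ℂ))^(2*k)).re := by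
    have := abs_le.mp (Complex.abs_re_le_norm (z^(2*k) - ((a:ℂ))^(2*k)))
    exact this.1
  have ha : (0:ℝ) ≤ a^(2*k) := (even_two_mul k).pow_nonneg a
  rw [hre]
  nlinarith [key, hlow]

noncomputable def CB (k : ℕ) (x : Fin (2*k) → ℝ) (x1 : ℝ) : ℝ :=
  (∑ i ∈ Finset.range (2*k), ‖(Qpoly k x x1).coeff i‖) + 8*(k:ℝ)^2

lemma CB_nonneg (k : ℕ) (x : Fin (2*k) → ℝ) (x1 : ℝ) : 0 ≤ CB k x x1 := by
  have : (0:ℝ) ≤ ∑ i ∈ Finset.range (2*k), ‖(Qpoly k x x1).coeff i‖ :=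
    Finset.sum_nonneg fun i _ => norm_nonneg _
  have : (0:ℝ) ≤ 8*(k:ℝ)^2 := by positivity
  unfold CB; positivity

lemma eval_Qpoly_bound (k : ℕ) (x : Fin (2*k) → ℝ) (x1 : ℝ) (hk : 1 ≤ k) (z : ℂ) :
    ‖(Qpoly k x x1).eval z‖
      ≤ (∑ i ∈ Finset.range (2*k), ‖(Qpoly k x x1).coeff i‖) * (1+‖z‖)^(2*k-1) := by
  have hev : (Qpoly k x x1).eval z
      = ∑ i ∈ Finset.range (2*k), (Qpoly k x x1).coeff i * z^i := by
    rw [eval_eq_sum_range' (lt_of_le_of_lt (natDegree_Qpoly k x x1 hk) (Nat.lt_succ_self _)) z,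
      Finset.sum_range_succ, coeff_Qpoly k x x1 hk]
    simp
  rw [hev]
  refine le_trans (norm_sum_le _ _) ?_
  rw [Finset.sum_mul]
  refine Finset.sum_le_sum fun i hi => ?_
  rw [norm_mul, norm_pow]
  have h0 : (0:ℝ) ≤ 1 + ‖z‖ := by positivity
  have h1 : ‖z‖^i ≤ (1+‖z‖)^i := pow_le_pow_left₀ (norm_nonneg _) (by linarith) i
  have h2 : (1+‖z‖)^i ≤ (1+‖z‖)^(2*k-1) := by
    apply pow_le_pow_right₀ (by linarith [norm_nonneg z])
    have := Finset.mem_range.mp hi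
    omega
  exact mul_le_mul_of_nonneg_left (h1.trans h2) (norm_nonneg _)

lemma eval_Ppoly (k : ℕ) (x : Fin (2*k) → ℝ) (x1 : ℝ) (z : ℂ) :
    (Ppoly k x x1).eval z
      = (z - (x1:ℂ)) * (derivative (Fpoly k x)).eval z - 2 * FF k x z := by
  simp [Ppoly, FF_eval]

lemma re_Ppoly_le (k : ℕ) (x : Fin (2*k) → ℝ) (x1 : ℝ) (hk : 1 ≤ k)
    (a b : ℝ) (hb : |b| ≤ 2) :
    ((Ppoly k x x1).eval ((a:ℂ) + b*Complex.I)).re ≤ CB k x x1 * (|a|+3)^(2*k-1) := by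
  set z : ℂ := (a:ℂ) + b*Complex.I with hz
  have hPQ : (Ppoly k x x1).eval z
      = (Qpoly k x x1).eval z - ((2*k:ℂ) - 2) * z^(2*k) := by
    simp [Qpoly]
  have hcoef : ((2*k:ℂ) - 2) = ((2*(k:ℝ) - 2 : ℝ) : ℂ) := by push_cast; ring
  have hre : (((2*k:ℂ) - 2) * z^(2*k)).re = (2*(k:ℝ)-2) * (z^(2*k)).re := by
    rw [hcoef, Complex.re_ofReal_mul]
  have hk2 : (0:ℝ) ≤ 2*(k:ℝ) - 2 := by
    have : (1:ℝ) ≤ (k:ℝ) := by exact_mod_cast hk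
    linarith
  have hlow := re_pow_lower k hk a b hb
  have hQ := eval_Qpoly_bound k x x1 hk z
  have hzn : 1 + ‖z‖ ≤ |a| + 3 := by
    have := norm_le_of_mem a b hb
    linarith
  have h3 : (0:ℝ) ≤ |a| + 2 := by linarith [abs_nonneg a]
  have hmon1 : (1+‖z‖)^(2*k-1) ≤ (|a|+3)^(2*k-1) :=
    pow_le_pow_left₀ (by positivity) hzn _
  have hmon2 : (|a|+2)^(2*k-1) ≤ (|a|+3)^(2*k-1) :=
    pow_le_pow_left₀ h3 (by linarith) _
  have hQ' : ((Qpoly k x x1).eval z).re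
      ≤ (∑ i ∈ Finset.range (2*k), ‖(Qpoly k x x1).coeff i‖) * (|a|+3)^(2*k-1) := by
    have habs := (abs_le.mp (Complex.abs_re_le_norm ((Qpoly k x x1).eval z))).2
    have hs0 : (0:ℝ) ≤ ∑ i ∈ Finset.range (2*k), ‖(Qpoly k x x1).coeff i‖ :=
      Finset.sum_nonneg fun i _ => norm_nonneg _
    calc ((Qpoly k x x1).eval z).re ≤ ‖(Qpoly k x x1).eval z‖ := habs
      _ ≤ _ * (1+‖z‖)^(2*k-1) := hQ
      _ ≤ _ * (|a|+3)^(2*k-1) := mul_le_mul_of_nonneg_left hmon1 hs0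
  have hneg : -((2*(k:ℝ)-2) * (z^(2*k)).re) ≤ (2*(k:ℝ)-2) * (2*(2*k)*(|a|+2)^(2*k-1)) := by
    nlinarith [hlow, hk2]
  have hbound2 : (2*(k:ℝ)-2) * (2*(2*(k:ℝ))*(|a|+2)^(2*k-1)) ≤ 8*(k:ℝ)^2 * (|a|+3)^(2*k-1) := by
    have hkk : (1:ℝ) ≤ (k:ℝ) := by exact_mod_cast hk
    nlinarith [hmon2, pow_nonneg h3 (2*k-1)]
  rw [hPQ, Complex.sub_re, hre]
  have : ((Qpoly k x x1).eval z).re - (2*(k:ℝ)-2) * (z^(2*k)).re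
      ≤ (∑ i ∈ Finset.range (2*k), ‖(Qpoly k x x1).coeff i‖) * (|a|+3)^(2*k-1)
        + 8*(k:ℝ)^2 * (|a|+3)^(2*k-1) := by
    have := hneg.trans (by push_cast; exact hbound2)
    linarith [hQ']
  calc ((Qpoly k x x1).eval z).re - (2*(k:ℝ)-2) * (z^(2*k)).re ≤ _ := this
    _ = CB k x x1 * (|a|+3)^(2*k-1) := by rw [CB]; ring


lemma base_pos {ε : ℝ} (hε : 0 < ε) : 0 < 3 * ε ^ (-(3:ℝ)/2) := by positivity

lemma xeps_pos (k : ℕ) {ε : ℝ} (hε : 0 < ε) : 0 < xeps k ε :=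
  Real.rpow_pos_of_pos (base_pos hε) _

lemma xeps_pow (k : ℕ) (hk : 1 ≤ k) {ε : ℝ} (hε : 0 < ε) :
    (xeps k ε)^(2*k) = 3 * ε ^ (-(3:ℝ)/2) := by
  rw [xeps, ← Real.rpow_natCast ((3 * ε ^ (-(3:ℝ)/2)) ^ ((1:ℝ)/(2*k))) (2*k),
    ← Real.rpow_mul (base_pos hε).le]
  have hke : (1:ℝ)/(2*k) * ((2*k : ℕ):ℝ) = 1 := by
    have : ((2*k : ℕ):ℝ) = 2*(k:ℝ) := by push_cast; ring
    rw [this]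
    field_simp
  rw [hke, Real.rpow_one]

lemma eps32_xeps (k : ℕ) (hk : 1 ≤ k) {ε : ℝ} (hε : 0 < ε) :
    ε ^ ((3:ℝ)/2) * (xeps k ε)^(2*k) = 3 := by
  rw [xeps_pow k hk hε, show ε ^ ((3:ℝ)/2) * (3 * ε ^ (-(3:ℝ)/2)) = 3 * (ε ^ ((3:ℝ)/2) * ε ^ (-(3:ℝ)/2)) from by ring,
    ← Real.rpow_add hε]
  norm_num

lemma eps32_xeps' (k : ℕ) (hk : 1 ≤ k) {ε : ℝ} (hε : 0 < ε) :
    ε ^ ((3:ℝ)/2) * (xeps k ε)^(2*k-1) = 3 / xeps k ε := by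
  have hx := xeps_pos k hε
  have h1 := eps32_xeps k hk hε
  have h2 : (xeps k ε)^(2*k) = (xeps k ε)^(2*k-1) * xeps k ε := by
    rw [← pow_succ]; congr 1; omega
  rw [h2] at h1
  field_simp
  linarith [h1]

lemma eps_xeps_sq (k : ℕ) (hk : 2 ≤ k) {ε : ℝ} (hε : 0 < ε) (hε1 : ε ≤ 1) :
    ε * (xeps k ε)^2 ≤ 3 * ε ^ ((1:ℝ)/4) := by
  have hb := base_pos hε
  have hk0 : (0:ℝ) < k := by exact_mod_cast Nat.lt_of_lt_of_le (by norm_num) hk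
  have h2 : (xeps k ε)^2 = 3 ^ ((1:ℝ)/k) * ε ^ (-(3:ℝ)/2 * ((1:ℝ)/k)) := by
    rw [xeps, ← Real.rpow_natCast ((3 * ε ^ (-(3:ℝ)/2)) ^ ((1:ℝ)/(2*k))) 2,
      ← Real.rpow_mul hb.le]
    have he : (1:ℝ)/(2*k) * ((2:ℕ):ℝ) = 1/k := by push_cast; field_simp
    rw [he, Real.mul_rpow (by norm_num) (Real.rpow_nonneg hε.le _), ← Real.rpow_mul hε.le]
  have h3 : ε * (xeps k ε)^2 = 3 ^ ((1:ℝ)/k) * ε ^ (1 + -(3:ℝ)/2 * ((1:ℝ)/k)) := by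
    rw [h2, Real.rpow_add hε, Real.rpow_one]; ring
  rw [h3]
  have hc1 : (3:ℝ) ^ ((1:ℝ)/k) ≤ 3 := by
    nth_rewrite 2 [show (3:ℝ) = 3 ^ (1:ℝ) from (Real.rpow_one 3).symm]
    apply Real.rpow_le_rpow_of_exponent_le (by norm_num)
    rw [div_le_one hk0]
    exact_mod_cast Nat.one_le_of_lt hk
  have hc2 : ε ^ (1 + -(3:ℝ)/2 * ((1:ℝ)/k)) ≤ ε ^ ((1:ℝ)/4) := by
    apply Real.rpow_le_rpow_of_exponent_ge hε hε1
    have hk2 : (2:ℝ) ≤ k := by exact_mod_cast hk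
    have h5 : (1:ℝ)/k ≤ 1/2 := by
      apply one_div_le_one_div_of_le (by norm_num) hk2
    linarith
  have := mul_le_mul hc1 hc2 (Real.rpow_nonneg hε.le _) (by norm_num)
  linarith

lemma xeps_ge (k : ℕ) (hk : 1 ≤ k) (M : ℝ) (hM : 1 ≤ M) {ε : ℝ} (hε : 0 < ε)
    (hεM : ε ≤ (3 / M^(2*k)) ^ ((2:ℝ)/3)) : M ≤ xeps k ε := by
  have hM0 : (0:ℝ) < M := lt_of_lt_of_le one_pos hM
  have hMp : (0:ℝ) < M^(2*k) := pow_pos hM0 _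
  have hq : (0:ℝ) ≤ 3 / M^(2*k) := by positivity
  have h1 : ε ^ ((3:ℝ)/2) ≤ 3 / M^(2*k) := by
    calc ε ^ ((3:ℝ)/2) ≤ ((3 / M^(2*k)) ^ ((2:ℝ)/3)) ^ ((3:ℝ)/2) :=
          Real.rpow_le_rpow hε.le hεM (by norm_num)
      _ = (3 / M^(2*k)) ^ ((2:ℝ)/3 * ((3:ℝ)/2)) := (Real.rpow_mul hq _ _).symm
      _ = 3 / M^(2*k) := by norm_num
  have hε32 : (0:ℝ) < ε ^ ((3:ℝ)/2) := Real.rpow_pos_of_pos hε _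
  have h2 : M^(2*k) ≤ 3 / ε ^ ((3:ℝ)/2) := by
    rw [le_div_iff₀ hMp] at h1
    rw [le_div_iff₀ hε32]
    nlinarith [h1]
  have h3 : (xeps k ε)^(2*k) = 3 / ε ^ ((3:ℝ)/2) := by
    rw [xeps_pow k hk hε, show (-(3:ℝ)/2) = -((3:ℝ)/2) from by ring,
      Real.rpow_neg hε.le]
    ring
  have h4 : M^(2*k) ≤ (xeps k ε)^(2*k) := by rw [h3]; exact h2
  exact le_of_pow_le_pow_left₀ (by omega) (xeps_pos k hε).le h4


end AUX

set_option maxHeartbeats 1000000 in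
theorem stmt6 (k : ℕ) (hk : 2 ≤ k) (x : Fin (2*k) → ℝ) (hx : StrictMono x)
    (h : ℝ) (hh : h ∈ Set.Ioo (0:ℝ) 1) :
    ∃ ε₀ > (0:ℝ), ∀ ε : ℝ, 0 < ε → ε < ε₀ →
      ∀ p : ℝ × ℝ,
        p ∈ Set.Icc (-(xeps k ε)) (xeps k ε) ×ˢ Set.Icc (-(1+h)) (1+h) →
        uu k x ε p = 0 →
        (p.1 - x ⟨0, by omega⟩) * px (uu k x ε) p + p.2 * py (uu k x ε) p ≤ -(1/2) := by
  classical
  have hk1 : 1 ≤ k := by omega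
  set x1 : ℝ := x ⟨0, by omega⟩ with hx1def
  set C1 : ℝ := 14 + 12*|x1| with hC1def
  set Cb : ℝ := CB k x x1 with hCbdef
  have hCb0 : 0 ≤ Cb := CB_nonneg k x x1
  have hC10 : (0:ℝ) < C1 := by positivity
  set M : ℝ := max 3 (12*(Cb+1)*4^(2*k-1)) with hMdef
  have hM3 : (3:ℝ) ≤ M := le_max_left _ _
  have hMB : 12*(Cb+1)*4^(2*k-1) ≤ M := le_max_right _ _
  have hM1 : (1:ℝ) ≤ M := by linarith
  have hM0 : (0:ℝ) < M := by linarith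
  set δ1 : ℝ := (1/(12*C1))^(4:ℕ) with hδ1def
  set δ2 : ℝ := (3 / M^(2*k)) ^ ((2:ℝ)/3) with hδ2def
  have hδ1pos : 0 < δ1 := by positivity
  have hδ2pos : 0 < δ2 := Real.rpow_pos_of_pos (by positivity) _
  refine ⟨min (min 1 δ1) δ2, by positivity, ?_⟩
  intro ε hε hεlt p hp hu
  have hε1 : ε ≤ 1 := le_trans hεlt.le (le_trans (min_le_left _ _) (min_le_left _ _))
  have hεδ1 : ε ≤ δ1 := le_trans hεlt.le (le_trans (min_le_left _ _) (min_le_right _ _))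
  have hεδ2 : ε ≤ δ2 := le_trans hεlt.le (min_le_right _ _)
  obtain ⟨hp1, hp2⟩ := Set.mem_prod.mp hp
  set r : ℝ := xeps k ε with hrdef
  have hrpos : 0 < r := xeps_pos k hε
  have hrM : M ≤ r := xeps_ge k hk1 M hM1 hε hεδ2
  have hr1 : (1:ℝ) ≤ r := le_trans hM1 hrM
  have hb2 : |p.2| ≤ 2 := by
    obtain ⟨h1, h2⟩ := hp2
    rw [abs_le]
    constructor
    · linarith only [h1, hh.2]
    · linarith only [h2, hh.2]
  have ha : |p.1| ≤ r := by
    rw [abs_le]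
    exact ⟨hp1.1, hp1.2⟩
  set e : ℝ := ε ^ ((3:ℝ)/2) with hedef
  have he0 : 0 < e := Real.rpow_pos_of_pos hε _
  set z : ℂ := (p.1:ℂ) + (p.2:ℂ)*Complex.I with hzdef
  set D : ℂ := (Polynomial.derivative (Fpoly k x)).eval z with hDdef
  have hpx := px_uu k x ε p
  have hpy := py_uu k x ε p
  have hDI : (D * Complex.I).re = -D.im := Complex.mul_I_re D
  have hBre : ((z - (x1:ℂ))*D - 2*FF k x z).re
      = (p.1 - x1)*D.re - p.2*D.im - 2*(FF k x z).re := by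
    rw [hzdef]
    simp [Complex.sub_re, Complex.mul_re, Complex.add_re, Complex.add_im,
      Complex.mul_im, Complex.ofReal_re, Complex.ofReal_im, Complex.I_re, Complex.I_im]
  have hvv : vv k x p = (FF k x z).re := rfl
  have huup : uu k x ε p = 1/2 - p.2^2/2 + ε*(p.2^3 - 3*p.1^2*p.2) + e * (FF k x z).re := by
    rw [uu, hvv]
  have hG : (p.1 - x1)*px (uu k x ε) p + p.2*py (uu k x ε) p
      = -1 + ε*(p.2^3 + 6*x1*p.1*p.2 - 3*p.1^2*p.2)
        + e*(((z - (x1:ℂ))*D - 2*FF k x z).re) + 2*(uu k x ε p) := by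
    rw [hpx, hpy, hDI, hBre, huup]
    ring
  rw [hu, mul_zero, add_zero] at hG
  -- bound the ε-term
  have hbl := abs_le.mp hb2
  have hal := abs_le.mp ha
  have hcube : p.2^3 ≤ 8 := by
    calc p.2^3 ≤ |p.2^3| := le_abs_self _
      _ = |p.2|^3 := abs_pow _ _
      _ ≤ 2^3 := pow_le_pow_left₀ (abs_nonneg _) hb2 3
      _ = 8 := by norm_num
  have hmid : 6*x1*p.1*p.2 ≤ 12*|x1| *r := by
    have h1 : x1*p.1*p.2 ≤ |x1| *(r*2) := by
      calc x1*p.1*p.2 ≤ |x1*p.1*p.2| := le_abs_self _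
        _ = |x1| *(|p.1| *|p.2|) := by rw [abs_mul, abs_mul, mul_assoc]
        _ ≤ |x1| *(r*2) := by
            apply mul_le_mul_of_nonneg_left _ (abs_nonneg x1)
            exact mul_le_mul ha hb2 (abs_nonneg _) hrpos.le
    linarith only [h1]
  have hr0 : (0:ℝ) ≤ r := hrpos.le
  have hr2 : (1:ℝ) ≤ r^2 := by
    calc (1:ℝ) = 1*1 := (one_mul 1).symm
      _ ≤ r*r := mul_le_mul hr1 hr1 zero_le_one hr0
      _ = r^2 := (pow_two r).symm
  have hrr2 : r ≤ r^2 := by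
    calc r = r*1 := (mul_one r).symm
      _ ≤ r*r := mul_le_mul_of_nonneg_left hr1 hr0
      _ = r^2 := (pow_two r).symm
  have hsq : p.1^2 ≤ r^2 := sq_le_sq' hal.1 hal.2
  have hlast : -(3*p.1^2*p.2) ≤ 6*r^2 := by
    have h1 : -p.2 ≤ 2 := by linarith only [hbl]
    have h2 : (0:ℝ) ≤ 3*p.1^2 := by positivity
    calc -(3*p.1^2*p.2) = 3*p.1^2*(-p.2) := by ring
      _ ≤ 3*p.1^2*2 := mul_le_mul_of_nonneg_left h1 h2
      _ = 6*p.1^2 := by ring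
      _ ≤ 6*r^2 := by linarith only [hsq]
  have hAle : p.2^3 + 6*x1*p.1*p.2 - 3*p.1^2*p.2 ≤ C1*r^2 := by
    have h8 : (8:ℝ) ≤ 8*r^2 := by linarith only [hr2]
    have hxr : 12*|x1| * r ≤ 12*|x1| * r^2 :=
      mul_le_mul_of_nonneg_left hrr2 (by positivity)
    rw [hC1def]
    linarith only [hcube, hmid, hlast, h8, hxr]
  have h14 : ε ^ ((1:ℝ)/4) ≤ 1/(12*C1) := by
    calc ε ^ ((1:ℝ)/4) ≤ δ1 ^ ((1:ℝ)/4) := Real.rpow_le_rpow hε.le hεδ1 (by norm_num)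
      _ = 1/(12*C1) := by
          rw [hδ1def, ← Real.rpow_natCast (1/(12*C1)) 4, ← Real.rpow_mul (by positivity)]
          norm_num
  have hterm1 : ε*(p.2^3 + 6*x1*p.1*p.2 - 3*p.1^2*p.2) ≤ 1/4 := by
    have s1 : ε*(p.2^3 + 6*x1*p.1*p.2 - 3*p.1^2*p.2) ≤ ε*(C1*r^2) :=
      mul_le_mul_of_nonneg_left hAle hε.le
    have s2 : ε*(C1*r^2) = C1*(ε*r^2) := by ring
    have s3 : C1*(ε*r^2) ≤ C1*(3*ε ^ ((1:ℝ)/4)) :=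
      mul_le_mul_of_nonneg_left (eps_xeps_sq k hk hε hε1) hC10.le
    have s4 : C1*(3*ε ^ ((1:ℝ)/4)) ≤ C1*(3*(1/(12*C1))) := by
      apply mul_le_mul_of_nonneg_left _ hC10.le
      linarith only [h14]
    have s5 : C1*(3*(1/(12*C1))) = 1/4 := by field_simp; ring
    calc ε*(p.2^3 + 6*x1*p.1*p.2 - 3*p.1^2*p.2) ≤ ε*(C1*r^2) := s1
      _ = C1*(ε*r^2) := s2
      _ ≤ C1*(3*ε ^ ((1:ℝ)/4)) := s3
      _ ≤ C1*(3*(1/(12*C1))) := s4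
      _ = 1/4 := s5
  -- bound the e-term
  have hPz : ((z - (x1:ℂ))*D - 2*FF k x z) = (Ppoly k x x1).eval z := by
    rw [eval_Ppoly, hDdef]
  have hBle : (((z - (x1:ℝ) :ℂ) * D - 2*FF k x z)).re ≤ Cb * (4*r)^(2*k-1) := by
    have h1 := re_Ppoly_le k x x1 hk1 p.1 p.2 hb2
    rw [← hzdef, ← hPz] at h1
    refine h1.trans ?_
    apply mul_le_mul_of_nonneg_left _ hCb0
    apply pow_le_pow_left₀ (by positivity)
    linarith only [ha, hr1]
  have hterm2 : e*(((z - (x1:ℂ))*D - 2*FF k x z).re) ≤ 1/4 := by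
    have s1 : e*(((z - (x1:ℂ))*D - 2*FF k x z).re) ≤ e*(Cb*(4*r)^(2*k-1)) :=
      mul_le_mul_of_nonneg_left hBle he0.le
    have s2 : e*(Cb*(4*r)^(2*k-1)) = Cb*4^(2*k-1)*(e*r^(2*k-1)) := by
      rw [mul_pow]; ring
    have s3 : e*r^(2*k-1) = 3/r := eps32_xeps' k hk1 hε
    have hL : (0:ℝ) < (4:ℝ)^(2*k-1) := by positivity
    have h12 : 12*Cb*4^(2*k-1) ≤ r := by
      have : 12*Cb*4^(2*k-1) ≤ 12*(Cb+1)*4^(2*k-1) := by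
        apply mul_le_mul_of_nonneg_right _ hL.le
        linarith only [hL]
      linarith only [this, hMB, hrM]
    have s4 : Cb*4^(2*k-1)*(3/r) ≤ 1/4 := by
      rw [show Cb*4^(2*k-1)*(3/r) = (3*(Cb*4^(2*k-1)))/r from by ring, div_le_iff₀ hrpos]
      linarith only [h12]
    calc e*(((z - (x1:ℂ))*D - 2*FF k x z).re) ≤ e*(Cb*(4*r)^(2*k-1)) := s1
      _ = Cb*4^(2*k-1)*(e*r^(2*k-1)) := s2
      _ = Cb*4^(2*k-1)*(3/r) := by rw [s3]
      _ ≤ 1/4 := s4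
  show (p.1 - x1)*px (uu k x ε) p + p.2*py (uu k x ε) p ≤ -(1/2)
  linarith only [hG, hterm1, hterm2]
end

section
/- Let s ∈ ℝ be any point with f(s) < 0. Then there exists ε₀ > 0 such that for every 0 < ε < ε₀ and every y ∈ [−(1+h), 1+h] one has u_ε(s, y) < 1/2. -/
open Set Filter Topology

set_option maxHeartbeats 1000000 in
theorem stmt9 (k : ℕ) (hk : 2 ≤ k) (x : Fin (2*k) → ℝ) (hx : StrictMono x)
    (h : ℝ) (hh : h ∈ Set.Ioo (0:ℝ) 1)
    (s : ℝ) (hs : ff k x s < 0) :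
    ∃ ε₀ > (0:ℝ), ∀ ε : ℝ, 0 < ε → ε < ε₀ →
      ∀ y ∈ Set.Icc (-(1+h)) (1+h), uu k x ε (s, y) < 1/2 := by
  -- Continuity of v in y
  have hvc : Continuous (fun y : ℝ => vv k x (s, y)) := by
    unfold vv FF
    fun_prop
  have hv0 : vv k x (s, 0) = ff k x s := by simp [vv, ff]
  set A : ℝ := -(ff k x s) with hA
  have hApos : 0 < A := by rw [hA]; linarith
  set C : ℝ := 4 + 3 * s ^ 2 with hC
  have hCpos : 0 < C := by rw [hC]; positivity
  -- δ from continuity at 0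
  have hvca : ContinuousAt (fun y : ℝ => vv k x (s, y)) 0 := hvc.continuousAt
  obtain ⟨δ, hδpos, hδ⟩ := Metric.continuousAt_iff.mp hvca (A/2) (by positivity)
  -- bound M on |v| over Icc (-2) 2
  obtain ⟨M, hM⟩ := (isCompact_Icc (a := (-2:ℝ)) (b := 2)).exists_bound_of_continuousOn
    hvc.continuousOn
  set M' : ℝ := max M 0 with hM'
  have hM'nn : 0 ≤ M' := le_max_right _ _
  have hMb : ∀ y ∈ Set.Icc (-2:ℝ) 2, |vv k x (s, y)| ≤ M' := fun y hy =>
    le_trans (hM y hy) (le_max_left _ _)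
  have hAC : 0 < (A / C ^ 2) ^ 2 := pow_pos (div_pos hApos (pow_pos hCpos 2)) 2
  have hDpos : 0 < 2 * (2 * C + M' + 1) := by nlinarith
  have hDel : 0 < δ ^ 2 / (2 * (2 * C + M' + 1)) := div_pos (pow_pos hδpos 2) hDpos
  refine ⟨min 1 (min ((A / C ^ 2) ^ 2) (δ ^ 2 / (2 * (2 * C + M' + 1)))),
    lt_min one_pos (lt_min hAC hDel), fun ε hε hεlt y hy => ?_⟩
  have hε1 : ε < 1 := lt_of_lt_of_le hεlt (min_le_left _ _)
  have hε2 : ε < (A / C ^ 2) ^ 2 :=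
    lt_of_lt_of_le hεlt (le_trans (min_le_right _ _) (min_le_left _ _))
  have hε3 : ε < δ ^ 2 / (2 * (2 * C + M' + 1)) :=
    lt_of_lt_of_le hεlt (le_trans (min_le_right _ _) (min_le_right _ _))
  have hy2 : |y| ≤ 2 := by
    rw [abs_le]; obtain ⟨h1, h2⟩ := hy
    exact ⟨by linarith [hh.2], by linarith [hh.2]⟩
  set r : ℝ := Real.sqrt ε with hr
  have hrpos : 0 < r := Real.sqrt_pos.mpr hε
  have hrs : r * r = ε := Real.mul_self_sqrt hε.le
  have hr1 : r < 1 := by nlinarith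
  have hE : ε ^ ((3:ℝ)/2) = ε * r := by
    rw [show (3:ℝ)/2 = 1 + 1/2 by norm_num, Real.rpow_add hε, Real.rpow_one, hr,
      Real.sqrt_eq_rpow]
  set g : ℝ := y ^ 3 - 3 * s ^ 2 * y with hg
  have hgb : |g| ≤ C * |y| := by
    have h2 : |g| = |y| * |y ^ 2 - 3 * s ^ 2| := by
      rw [← abs_mul, hg]; ring_nf
    rw [h2]
    have h1 : |y ^ 2 - 3 * s ^ 2| ≤ C := by
      rw [abs_le, hC]
      constructor <;> nlinarith [sq_abs y, abs_nonneg y]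
    calc |y| * |y ^ 2 - 3 * s ^ 2| ≤ |y| * C :=
          mul_le_mul_of_nonneg_left h1 (abs_nonneg y)
      _ = C * |y| := mul_comm _ _
  set v : ℝ := vv k x (s, y) with hv
  have goal_eq : uu k x ε (s, y) = 1/2 + (- y ^ 2 / 2 + ε * g + ε * r * v) := by
    simp only [uu, hE, hg, hv]; ring_nf
  rw [goal_eq]
  clear_value A C M' r g v
  have key : - y ^ 2 / 2 + ε * g + ε * r * v < 0 := by
    rcases lt_or_ge (|y|) δ with hcase | hcase
    · -- small y : use v close to f(s)
      have hvd : |v - vv k x (s, 0)| < A / 2 := by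
        have h3 := hδ (show dist y (0:ℝ) < δ by rw [Real.dist_eq, sub_zero]; exact hcase)
        rw [Real.dist_eq, ← hv] at h3
        exact h3
      rw [hv0] at hvd
      have hvle : v ≤ -(A/2) := by
        have h4 := (abs_lt.mp hvd).2
        linarith
      have hrlt : r * C ^ 2 < A := by
        have h1 : r < A / C ^ 2 := by
          have h5 := Real.sqrt_lt_sqrt hε.le hε2
          rwa [Real.sqrt_sq (div_pos hApos (pow_pos hCpos 2)).le, ← hr] at h5
        calc r * C ^ 2 < (A / C ^ 2) * C ^ 2 :=
              mul_lt_mul_of_pos_right h1 (pow_pos hCpos 2)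
          _ = A := by field_simp
      have hkey : ε * ε * C ^ 2 < ε * r * A := by
        calc ε * ε * C ^ 2 = (ε * r) * (r * C ^ 2) := by rw [← hrs]; ring
          _ < (ε * r) * A := mul_lt_mul_of_pos_left hrlt (mul_pos hε hrpos)
      have hεg : ε * g ≤ ε * (C * |y|) :=
        mul_le_mul_of_nonneg_left (le_trans (le_abs_self g) hgb) hε.le
      have hεrv : ε * r * v ≤ ε * r * (-(A/2)) :=
        mul_le_mul_of_nonneg_left hvle (mul_pos hε hrpos).le
      have hcomb : ε * (C * |y|) - y ^ 2 / 2 ≤ ε * ε * C ^ 2 / 2 := by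
        nlinarith [sq_nonneg (|y| - ε * C), sq_abs y]
      linarith [hεg, hεrv, hkey, hcomb]
    · -- large y
      have hyδ : δ ^ 2 ≤ y ^ 2 := by nlinarith [sq_abs y, abs_nonneg y]
      have hvM : v ≤ M' := by
        rw [hv]
        exact le_trans (le_abs_self _)
          (hMb y ⟨by linarith [(abs_le.mp hy2).1], by linarith [(abs_le.mp hy2).2]⟩)
      have hgle : g ≤ 2 * C := by
        have : C * |y| ≤ C * 2 := mul_le_mul_of_nonneg_left hy2 hCpos.le
        calc g ≤ |g| := le_abs_self g
          _ ≤ C * |y| := hgb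
          _ ≤ 2 * C := by linarith
      have hεg : ε * g ≤ ε * (2 * C) := mul_le_mul_of_nonneg_left hgle hε.le
      have hεrv : ε * r * v ≤ ε * M' := by
        have h6 : ε * r * v ≤ ε * r * M' :=
          mul_le_mul_of_nonneg_left hvM (mul_pos hε hrpos).le
        nlinarith [mul_nonneg hε.le hM'nn]
      have hδ2 : ε * (2 * (2 * C + M' + 1)) < δ ^ 2 := (lt_div_iff₀ hDpos).mp hε3
      nlinarith [hε, hyδ, hεg, hεrv, hδ2]
  linarith
end

section
/- For each j = 1,…,k choose a point s̄_j ∈ (x_{2j−1}, x_{2j}) with f(s̄_j) > 0. There exists ε₀ > 0 such that for every 0 < ε < ε₀: each point (s̄_j, 0) belongs to Ω_ε, u_ε(s̄_j, 0) > 1/2, and for j ≠ j′ the points (s̄_j, 0) and (s̄_{j′}, 0) lie in distinct connected components of the open set {(x,y) ∈ ℝ² : u_ε(x,y) > 1/2}. In particular {u_ε > 1/2} has at least k connected components meeting Ω_ε. -/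
open Set Filter Topology

lemma ff_eq (k : ℕ) (x : Fin (2*k) → ℝ) (t : ℝ) : ff k x t = -∏ i, (t - x i) := by
  unfold ff FF
  simp only [← Complex.ofReal_sub, ← Complex.ofReal_prod, ← Complex.ofReal_neg,
    Complex.ofReal_re]

lemma vv_zero (k : ℕ) (x : Fin (2*k) → ℝ) (t : ℝ) : vv k x (t, 0) = ff k x t := by
  simp [vv, ff]

lemma cont_vv (k : ℕ) (x : Fin (2*k) → ℝ) : Continuous (vv k x) := by
  have hFF : Continuous (FF k x) := by
    unfold FF
    exact (continuous_finset_prod _ fun i _ => continuous_id.sub continuous_const).neg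
  exact Complex.continuous_re.comp (hFF.comp
    ((Complex.continuous_ofReal.comp continuous_fst).add
      ((Complex.continuous_ofReal.comp continuous_snd).mul continuous_const)))

lemma cont_uu (k : ℕ) (x : Fin (2*k) → ℝ) (ε : ℝ) : Continuous (uu k x ε) := by
  unfold uu
  apply Continuous.add
  apply Continuous.add
  · exact (continuous_const.sub ((continuous_snd.pow 2).div_const 2))
  · exact continuous_const.mul (((continuous_snd.pow 3)).sub
      ((continuous_const.mul (continuous_fst.pow 2)).mul continuous_snd))
  · exact continuous_const.mul (cont_vv k x)

lemma card_filter_val_lt (N n : ℕ) (h : n ≤ N) :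
    (Finset.univ.filter fun l : Fin N => (l:ℕ) < n).card = n := by
  have e : (Finset.univ.filter fun l : Fin N => (l:ℕ) < n)
      = Finset.map (Fin.castLEEmb h) Finset.univ := by
    ext l; simp [Fin.castLEEmb]
    constructor
    · intro hl; exact ⟨⟨l, hl⟩, rfl⟩
    · rintro ⟨a, rfl⟩; exact a.isLt
  rw [e]; simp

lemma prod_neg_even_pos {α : Type*} {s : Finset α} {g : α → ℝ}
    (h : ∀ a ∈ s, g a < 0) (hc : Even s.card) : 0 < ∏ a ∈ s, g a := by
  have e : ∏ a ∈ s, g a = (-1)^s.card * ∏ a ∈ s, (-g a) := by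
    rw [← Finset.prod_const, ← Finset.prod_mul_distrib]; simp
  rw [e, hc.neg_one_pow, one_mul]
  exact Finset.prod_pos fun a ha => neg_pos.2 (h a ha)

lemma connCompIn_subset {X : Type*} [TopologicalSpace X]
    {U B : Set X} (hB : IsOpen B) (hfr : ∀ p ∈ frontier B, p ∉ U)
    {p : X} (hpB : p ∈ B) (hpU : p ∈ U) :
    connectedComponentIn U p ⊆ B := by
  have hC : IsPreconnected (connectedComponentIn U p) := isPreconnected_connectedComponentIn
  apply hC.subset_left_of_subset_union hB isClosed_closure.isOpen_compl
  · exact disjoint_compl_right.mono_right (compl_subset_compl.2 subset_closure)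
  · intro q hq
    by_cases hqc : q ∈ closure B
    · left
      have hnf : q ∉ frontier B := fun hf => hfr q hf (connectedComponentIn_subset U p hq)
      rw [hB.frontier_eq] at hnf
      by_contra hqB
      exact hnf ⟨hqc, hqB⟩
    · right; exact hqc
  · exact ⟨p, mem_connectedComponentIn hpU, hpB⟩


lemma est_axis (η M f : ℝ) (hη : 0 < η) (hη1 : η < 1) (hM : 0 ≤ M) (hf : |f| ≤ M)
    (hA : η * (2*(M+1)) < 1) : 0 < 1/2 + η^3*f := by
  have h1 : -M ≤ f := (abs_le.1 hf).1
  have h2 : η^3 ≤ η := by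
    calc η^3 ≤ η^1 := pow_le_pow_of_le_one hη.le hη1.le (by norm_num)
      _ = η := pow_one η
  have h3 : η^3 * f ≥ -(η^3 * M) := by nlinarith [pow_pos hη 3]
  have h4 : η^3 * M ≤ η * M := by nlinarith
  nlinarith

lemma est_side (η y mi B0 c v C1 : ℝ) (hη : 0 < η) (hη1 : η < 1)
    (hmB : |mi| ≤ B0) (hB0 : 0 ≤ B0) (hy1 : |y| ≤ 1)
    (hv : v ≤ -c/2) (hc : 0 < c) (hC1 : C1 = 1 + 3*B0^2)
    (hηC : η * C1^2 < c) :
    1/2 - y^2/2 + η^2*(y^3 - 3*mi^2*y) + η^3*v ≤ 1/2 := by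
  have habs : y^3 - 3*mi^2*y ≤ C1 * |y| := by
    have h1 : y^3 ≤ |y| := by
      rcases abs_cases y with ⟨e, h0⟩ | ⟨e, h0⟩ <;>
        (rw [e] at hy1 ⊢; nlinarith [sq_nonneg y])
    have h2 : -(3*mi^2*y) ≤ 3*B0^2*|y| := by
      have hb : -y ≤ |y| := neg_le_abs y
      have hmi2 : mi^2 ≤ B0^2 := by nlinarith [sq_abs mi, abs_nonneg mi]
      calc -(3*mi^2*y) = 3*mi^2*(-y) := by ring
        _ ≤ 3*mi^2*|y| := by
            apply mul_le_mul_of_nonneg_left hb (by positivity)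
        _ ≤ 3*B0^2*|y| := by
            apply mul_le_mul_of_nonneg_right (by nlinarith) (abs_nonneg y)
    nlinarith [abs_nonneg y]
  have e1 : η^2 * (y^3 - 3*mi^2*y) ≤ η^2 * (C1*|y|) :=
    mul_le_mul_of_nonneg_left habs (by positivity)
  have e2 : η^2 * (C1*|y|) ≤ y^2/2 + (η^2*C1)^2/2 := by
    nlinarith [sq_nonneg (|y| - η^2*C1), sq_abs y]
  have e3 : η^3 * v ≤ η^3 * (-c/2) := mul_le_mul_of_nonneg_left hv (by positivity)
  have e4 : (η^2*C1)^2/2 ≤ η^3 * (c/2) := by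
    nlinarith [pow_pos hη 3, sq_nonneg C1, pow_pos hη 4]
  nlinarith

lemma est_top (η y t B0 M v C1 δ : ℝ) (hη : 0 < η) (hη1 : η < 1)
    (htB : |t| ≤ B0) (hB0 : 0 ≤ B0) (hδpos : 0 < δ) (hδ1 : δ ≤ 1) (hyδ : |y| = δ)
    (hv : |v| ≤ M) (hM : 0 ≤ M) (hC1 : C1 = 1 + 3*B0^2)
    (hηB : η*(2*(C1+M)+1) < δ^2) :
    1/2 - y^2/2 + η^2*(y^3 - 3*t^2*y) + η^3*v ≤ 1/2 := by
  have hy1 : |y| ≤ 1 := by rw [hyδ]; exact hδ1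
  have habs : y^3 - 3*t^2*y ≤ C1 * |y| := by
    have h1 : y^3 ≤ |y| := by
      rcases abs_cases y with ⟨e, h0⟩ | ⟨e, h0⟩ <;>
        (rw [e] at hy1 ⊢; nlinarith [sq_nonneg y])
    have h2 : -(3*t^2*y) ≤ 3*B0^2*|y| := by
      have hb : -y ≤ |y| := neg_le_abs y
      have hmi2 : t^2 ≤ B0^2 := by nlinarith [sq_abs t, abs_nonneg t]
      calc -(3*t^2*y) = 3*t^2*(-y) := by ring
        _ ≤ 3*t^2*|y| := by
            apply mul_le_mul_of_nonneg_left hb (by positivity)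
        _ ≤ 3*B0^2*|y| := by
            apply mul_le_mul_of_nonneg_right (by nlinarith) (abs_nonneg y)
    nlinarith [abs_nonneg y]
  have hC1pos : 0 < C1 := by rw [hC1]; positivity
  have hyy : y^2 = δ^2 := by rw [← sq_abs y, hyδ]
  have e1 : η^2 * (y^3 - 3*t^2*y) ≤ η^2 * (C1*|y|) :=
    mul_le_mul_of_nonneg_left habs (by positivity)
  have e2 : η^2 * (C1*|y|) ≤ η * C1 := by
    have h2 : η^2 ≤ η := by
      calc η^2 ≤ η^1 := pow_le_pow_of_le_one hη.le hη1.le (by norm_num)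
        _ = η := pow_one η
    have h3 : C1 * |y| ≤ C1 := by nlinarith
    nlinarith [sq_nonneg η]
  have e3 : η^3 * v ≤ η * M := by
    have h2 : η^3 ≤ η := by
      calc η^3 ≤ η^1 := pow_le_pow_of_le_one hη.le hη1.le (by norm_num)
        _ = η := pow_one η
    have h4 : η^3 * v ≤ η^3 * M := mul_le_mul_of_nonneg_left (abs_le.1 hv).2 (by positivity)
    nlinarith
  nlinarith

set_option maxHeartbeats 1000000 in
theorem stmt10 (k : ℕ) (hk : 2 ≤ k) (x : Fin (2*k) → ℝ) (hx : StrictMono x)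
    (h : ℝ) (hh : h ∈ Set.Ioo (0:ℝ) 1)
    (s : Fin k → ℝ)
    (hs : ∀ j : Fin k,
      x ⟨2*(j:ℕ), by have := j.isLt; omega⟩ < s j ∧
      s j < x ⟨2*(j:ℕ)+1, by have := j.isLt; omega⟩ ∧
      0 < ff k x (s j)) :
    ∃ ε₀ > (0:ℝ), ∀ ε : ℝ, 0 < ε → ε < ε₀ →
      (∀ j : Fin k,
        (s j, (0:ℝ)) ∈ Omeg k hk x ε ∧ 1/2 < uu k x ε (s j, 0)) ∧
      (∀ j j' : Fin k, j ≠ j' →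
        connectedComponentIn {p : ℝ × ℝ | 1/2 < uu k x ε p} (s j, 0) ≠
        connectedComponentIn {p : ℝ × ℝ | 1/2 < uu k x ε p} (s j', 0)) := by
  classical
  -- separator points
  set m : ℕ → ℝ := fun i =>
    if i = 0 then x ⟨0, by omega⟩ - 1
    else if hik : i < k then (x ⟨2*i-1, by omega⟩ + x ⟨2*i, by omega⟩)/2
    else x ⟨2*k-1, by omega⟩ + 1 with hm
  have hP1 : ∀ i, i ≤ k → ∀ l : Fin (2*k), (l:ℕ) < 2*i → x l < m i := by
    intro i hik l hl
    rcases Nat.eq_zero_or_pos i with rfl | hi0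
    · omega
    by_cases hlt : i < k
    · have e : m i = (x ⟨2*i-1, by omega⟩ + x ⟨2*i, by omega⟩)/2 := by
        simp only [hm]; rw [if_neg (by omega), dif_pos hlt]
      rw [e]
      have h1 : x l ≤ x ⟨2*i-1, by omega⟩ := hx.monotone (by simp [Fin.le_def]; omega)
      have h2 : x ⟨2*i-1, by omega⟩ < x ⟨2*i, by omega⟩ := hx (by simp [Fin.lt_def]; omega)
      linarith
    · have e : m i = x ⟨2*k-1, by omega⟩ + 1 := by
        simp only [hm]; rw [if_neg (by omega), dif_neg hlt]
      rw [e]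
      have h1 : x l ≤ x ⟨2*k-1, by omega⟩ := hx.monotone (by simp [Fin.le_def]; omega)
      linarith
  have hP2 : ∀ i, i ≤ k → ∀ l : Fin (2*k), 2*i ≤ (l:ℕ) → m i < x l := by
    intro i hik l hl
    rcases Nat.eq_zero_or_pos i with rfl | hi0
    · have e : m 0 = x ⟨0, by omega⟩ - 1 := by simp only [hm]; simp
      rw [e]
      have h1 : x ⟨0, by omega⟩ ≤ x l := hx.monotone (by simp [Fin.le_def])
      linarith
    have hlt : i < k := by
      rcases Nat.lt_or_ge i k with h' | h'
      · exact h'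
      · exfalso; have := l.isLt; omega
    have e : m i = (x ⟨2*i-1, by omega⟩ + x ⟨2*i, by omega⟩)/2 := by
      simp only [hm]; rw [if_neg (by omega), dif_pos hlt]
    rw [e]
    have h1 : x ⟨2*i, by omega⟩ ≤ x l := hx.monotone (by simp [Fin.le_def]; omega)
    have h2 : x ⟨2*i-1, by omega⟩ < x ⟨2*i, by omega⟩ := hx (by simp [Fin.lt_def]; omega)
    linarith
  -- monotonicity of separators
  have hmono : ∀ i j : ℕ, i < j → j ≤ k → m i < m j := by
    intro i j hij hjk
    have hik : i ≤ k := by omega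
    have h2i : 2*i < 2*k := by omega
    have h1 : m i < x ⟨2*i, h2i⟩ := hP2 i hik ⟨2*i, h2i⟩ (by simp only [Fin.val_mk]; omega)
    have h2 : x ⟨2*i, h2i⟩ < m j := hP1 j hjk ⟨2*i, h2i⟩ (by simp only [Fin.val_mk]; omega)
    linarith
  have hmono' : ∀ i j : ℕ, i ≤ j → j ≤ k → m i ≤ m j := by
    intro i j hij hjk
    rcases Nat.eq_or_lt_of_le hij with rfl | h'
    · exact le_refl _
    · exact (hmono i j h' hjk).le
  -- f is negative at separators
  have hffneg : ∀ i, i ≤ k → ff k x (m i) < 0 := by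
    intro i hik
    rw [ff_eq]
    have hpos : 0 < ∏ l : Fin (2*k), (m i - x l) := by
      rw [← Finset.prod_filter_mul_prod_filter_not Finset.univ
        (fun l : Fin (2*k) => (l:ℕ) < 2*i) (fun l => m i - x l)]
      apply mul_pos
      · apply Finset.prod_pos
        intro l hl
        simp only [Finset.mem_filter] at hl
        have := hP1 i hik l hl.2
        linarith
      · apply prod_neg_even_pos
        · intro l hl
          simp only [Finset.mem_filter] at hl
          have := hP2 i hik l (by omega)
          linarith
        · have hcard := Finset.card_filter_add_card_filter_not
            (s := (Finset.univ : Finset (Fin (2*k)))) (p := fun l : Fin (2*k) => (l:ℕ) < 2*i)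
          rw [card_filter_val_lt (2*k) (2*i) (by omega)] at hcard
          simp only [Finset.card_univ, Fintype.card_fin] at hcard
          rw [Nat.even_iff]
          omega
    linarith
  -- the constant c
  set c : ℝ := Finset.inf' (Finset.range (k+1)) (by simp) (fun i => -(ff k x (m i))) with hcdef
  have hc : 0 < c := by
    rw [hcdef, Finset.lt_inf'_iff]
    intro i hi
    simp only [Finset.mem_range] at hi
    have := hffneg i (by omega)
    linarith
  have hcle : ∀ i, i ≤ k → ff k x (m i) ≤ -c := by
    intro i hik
    have := Finset.inf'_le (fun i => -(ff k x (m i)))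
      (Finset.mem_range.2 (by omega : i < k+1))
    rw [← hcdef] at this
    linarith
  -- choice of δ
  have hδev : ∀ᶠ y : ℝ in 𝓝 0, ∀ i ∈ Finset.range (k+1), vv k x (m i, y) < -c/2 := by
    rw [Filter.eventually_all_finset]
    intro i hi
    simp only [Finset.mem_range] at hi
    have hopen : IsOpen {y : ℝ | vv k x (m i, y) < -c/2} :=
      isOpen_lt ((cont_vv k x).comp (continuous_const.prodMk continuous_id)) continuous_const
    have h0 : (0:ℝ) ∈ {y : ℝ | vv k x (m i, y) < -c/2} := by
      have := hcle i (by omega)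
      simp only [mem_setOf_eq, vv_zero]
      linarith
    exact hopen.mem_nhds h0
  rw [Metric.eventually_nhds_iff] at hδev
  obtain ⟨δ', hδ'pos, hδ'⟩ := hδev
  set δ : ℝ := min (δ'/2) 1 with hδdef
  have hδpos : 0 < δ := by rw [hδdef]; positivity
  have hδ1 : δ ≤ 1 := min_le_right _ _
  have hδv : ∀ i, i ≤ k → ∀ y : ℝ, |y| ≤ δ → vv k x (m i, y) < -c/2 := by
    intro i hik y hy
    have hd : dist y 0 < δ' := by
      rw [Real.dist_eq, sub_zero]
      have : δ < δ' := lt_of_le_of_lt (min_le_left _ _) (by linarith)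
      linarith
    exact hδ' hd i (Finset.mem_range.2 (by omega))
  -- the bound M
  have hKcomp : IsCompact (Icc (m 0) (m k) ×ˢ Icc (-1:ℝ) 1) :=
    isCompact_Icc.prod isCompact_Icc
  obtain ⟨M0, hM0⟩ := hKcomp.exists_bound_of_continuousOn (cont_vv k x).continuousOn
  set M : ℝ := max M0 0 with hMdef
  have hMnn : 0 ≤ M := le_max_right _ _
  have hM : ∀ p ∈ Icc (m 0) (m k) ×ˢ Icc (-1:ℝ) 1, |vv k x p| ≤ M := by
    intro p hp
    have := hM0 p hp
    rw [Real.norm_eq_abs] at this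
    exact le_trans this (le_max_left _ _)
  -- the bound B0, C1
  set B0 : ℝ := max |m 0| |m k| with hB0def
  have hB0 : ∀ z ∈ Icc (m 0) (m k), |z| ≤ B0 := by
    intro z hz
    rw [abs_le]
    constructor
    · have := neg_abs_le (m 0); have h2 : |m 0| ≤ B0 := le_max_left _ _
      linarith [hz.1]
    · have := le_abs_self (m k); have h2 : |m k| ≤ B0 := le_max_right _ _
      linarith [hz.2]
  set C1 : ℝ := 1 + 3*B0^2 with hC1def
  have hC1pos : 0 < C1 := by positivity
  have hB0nn : 0 ≤ B0 := le_trans (abs_nonneg _) (le_max_left _ _)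
  -- choice of ε₀
  set η₀ : ℝ := min 1 (min (1/(2*(M+1))) (min (δ^2/(2*(C1+M)+1)) (c/(C1^2+1)))) with hη₀def
  have hη₀pos : 0 < η₀ := by
    rw [hη₀def]
    refine lt_min one_pos (lt_min (by positivity) (lt_min (by positivity) (by positivity)))
  refine ⟨η₀^2, by positivity, ?_⟩
  intro ε hε hεlt
  set η : ℝ := Real.sqrt ε with hηdef
  have hηpos : 0 < η := Real.sqrt_pos.2 hε
  have hηlt : η < η₀ := by
    rw [hηdef, show η₀ = Real.sqrt (η₀^2) from (Real.sqrt_sq hη₀pos.le).symm]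
    exact Real.sqrt_lt_sqrt hε.le hεlt
  have hη1 : η < 1 := lt_of_lt_of_le hηlt (min_le_left _ _)
  have hηA : η * (2*(M+1)) < 1 := by
    have h1 : η < 1/(2*(M+1)) :=
      lt_of_lt_of_le hηlt (le_trans (min_le_right _ _) (min_le_left _ _))
    have h2 : (0:ℝ) < 2*(M+1) := by linarith
    calc η * (2*(M+1)) < (1/(2*(M+1))) * (2*(M+1)) := by
          exact mul_lt_mul_of_pos_right h1 h2
      _ = 1 := by field_simp
  have hηB : η * (2*(C1+M)+1) < δ^2 := by
    have h1 : η < δ^2/(2*(C1+M)+1) :=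
      lt_of_lt_of_le hηlt (le_trans (min_le_right _ _)
        (le_trans (min_le_right _ _) (min_le_left _ _)))
    have h2 : (0:ℝ) < 2*(C1+M)+1 := by linarith
    calc η * (2*(C1+M)+1) < (δ^2/(2*(C1+M)+1)) * (2*(C1+M)+1) :=
          mul_lt_mul_of_pos_right h1 h2
      _ = δ^2 := by field_simp
  have hηC : η * C1^2 < c := by
    have h1 : η < c/(C1^2+1) :=
      lt_of_lt_of_le hηlt (le_trans (min_le_right _ _)
        (le_trans (min_le_right _ _) (min_le_right _ _)))
    have h2 : (0:ℝ) < C1^2+1 := by positivity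
    have h3 : η * (C1^2+1) < c := by
      calc η * (C1^2+1) < (c/(C1^2+1)) * (C1^2+1) := mul_lt_mul_of_pos_right h1 h2
        _ = c := by field_simp
    nlinarith
  have hε2 : ε = η^2 := (Real.sq_sqrt hε.le).symm
  have hε32 : ε ^ ((3:ℝ)/2) = η^3 := by
    rw [hηdef, Real.sqrt_eq_rpow, ← Real.rpow_natCast (ε ^ ((1:ℝ)/2)) 3,
      ← Real.rpow_mul hε.le]
    norm_num
  have hη3 : η^3 ≤ η := by
    calc η^3 ≤ η^1 := pow_le_pow_of_le_one hηpos.le hη1.le (by norm_num)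
      _ = η := pow_one η
  have hη2 : η^2 ≤ η := by
    calc η^2 ≤ η^1 := pow_le_pow_of_le_one hηpos.le hη1.le (by norm_num)
      _ = η := pow_one η
  have huu : ∀ a b : ℝ, uu k x ε (a, b) =
      1/2 - b^2/2 + η^2*(b^3 - 3*a^2*b) + η^3*(vv k x (a, b)) := by
    intro a b
    simp only [uu]
    rw [hε32, hε2]
  -- formula on the axis
  have huax : ∀ t : ℝ, uu k x ε (t, 0) = 1/2 + η^3 * ff k x t := by
    intro t
    simp only [uu, vv_zero, hε32]
    norm_num
  -- f bound on the interval
  have hMf : ∀ t ∈ Icc (m 0) (m k), |ff k x t| ≤ M := by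
    intro t ht
    have := hM (t, 0) ⟨ht, by norm_num⟩
    rwa [vv_zero] at this
  -- location of base points
  have hx0m : x ⟨0, by omega⟩ ∈ Icc (m 0) (m k) := by
    constructor
    · exact (hP2 0 (by omega) ⟨0, by omega⟩ (by omega)).le
    · exact (hP1 k (le_refl k) ⟨0, by omega⟩ (by omega)).le
  have hsm : ∀ j : Fin k, m (j:ℕ) < s j ∧ s j < m ((j:ℕ)+1) := by
    intro j
    have hj := j.isLt
    obtain ⟨hs1, hs2, _⟩ := hs j
    constructor
    · have := hP2 (j:ℕ) (by omega) ⟨2*(j:ℕ), by omega⟩ (by simp only [Fin.val_mk]; omega)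
      linarith
    · have := hP1 ((j:ℕ)+1) (by omega) ⟨2*(j:ℕ)+1, by omega⟩ (by simp only [Fin.val_mk]; omega)
      linarith
  have hsm' : ∀ j : Fin k, s j ∈ Icc (m 0) (m k) := by
    intro j
    have hj := j.isLt
    obtain ⟨h1, h2⟩ := hsm j
    constructor
    · have := hmono' 0 (j:ℕ) (by omega) (by omega)
      linarith
    · have := hmono' ((j:ℕ)+1) k (by omega) (le_refl k)
      linarith
  -- Part 1a : u > 0 on the segment
  have hseg : (Icc (m 0) (m k) ×ˢ ({0} : Set ℝ)) ⊆ {p : ℝ × ℝ | 0 < uu k x ε p} := by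
    rintro ⟨t, y⟩ ⟨ht, hy⟩
    simp only [mem_singleton_iff] at hy
    subst hy
    simp only [mem_setOf_eq, huax]
    exact est_axis η M (ff k x t) hηpos hη1 hMnn (hMf t ht) hηA
  have hsegconn : IsPreconnected (Icc (m 0) (m k) ×ˢ ({0} : Set ℝ)) :=
    isPreconnected_Icc.prod isPreconnected_singleton
  have hmem1 : ∀ j : Fin k, (s j, (0:ℝ)) ∈ Omeg k hk x ε := by
    intro j
    have hsub := hsegconn.subset_connectedComponentIn
      (x := (x ⟨0, by omega⟩, (0:ℝ))) ⟨hx0m, rfl⟩ hseg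
    exact hsub ⟨hsm' j, rfl⟩
  have hval : ∀ j : Fin k, 1/2 < uu k x ε (s j, 0) := by
    intro j
    rw [huax]
    have h1 := (hs j).2.2
    have := mul_pos (pow_pos hηpos 3) h1
    linarith
  -- side estimate
  have hside : ∀ i, i ≤ k → ∀ y : ℝ, |y| ≤ δ → uu k x ε (m i, y) ≤ 1/2 := by
    intro i hik y hy
    have hmi : m i ∈ Icc (m 0) (m k) := ⟨hmono' 0 i (by omega) hik, hmono' i k hik (le_refl k)⟩
    have hmB : |m i| ≤ B0 := hB0 _ hmi
    have hv : vv k x (m i, y) < -c/2 := hδv i hik y hy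
    have hy1 : |y| ≤ 1 := le_trans hy hδ1
    have hest := est_side η y (m i) B0 c (vv k x (m i, y)) C1 hηpos hη1 hmB hB0nn hy1
      hv.le hc hC1def hηC
    rw [huu]
    linarith [hest]
  -- top estimate
  have htop : ∀ t ∈ Icc (m 0) (m k), ∀ y : ℝ, |y| = δ → uu k x ε (t, y) ≤ 1/2 := by
    intro t ht y hy
    have htB : |t| ≤ B0 := hB0 _ ht
    have hy1 : |y| ≤ 1 := by rw [hy]; exact hδ1
    have hv : |vv k x (t, y)| ≤ M := hM (t, y) ⟨ht, abs_le.1 hy1⟩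
    have hest := est_top η y t B0 M (vv k x (t, y)) C1 δ hηpos hη1 htB hB0nn hδpos hδ1 hy
      hv hMnn hC1def hηB
    rw [huu]
    linarith [hest]
  -- the separating boxes
  set U : Set (ℝ × ℝ) := {p : ℝ × ℝ | 1/2 < uu k x ε p} with hUdef
  have hUopen : IsOpen U := isOpen_lt continuous_const (cont_uu k x ε)
  have hbox : ∀ j : Fin k,
      connectedComponentIn U (s j, 0) ⊆ Ioo (m (j:ℕ)) (m ((j:ℕ)+1)) ×ˢ Ioo (-δ) δ := by
    intro j
    have hj := j.isLt
    have hmj : m (j:ℕ) < m ((j:ℕ)+1) := hmono _ _ (by omega) (by omega)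
    apply connCompIn_subset
    · exact (isOpen_Ioo.prod isOpen_Ioo)
    · intro p hp hpU
      rw [frontier_prod_eq, closure_Ioo hmj.ne, closure_Ioo (by linarith : -δ ≠ δ),
        frontier_Ioo hmj, frontier_Ioo (by linarith : -δ < δ)] at hp
      have hpU' : 1/2 < uu k x ε p := by rw [hUdef] at hpU; exact hpU
      rcases hp with ⟨hp1, hp2⟩ | ⟨hp1, hp2⟩
      · -- top/bottom
        have hy : |p.2| = δ := by
          rcases hp2 with e | e <;> rw [e] <;> simp [abs_of_pos hδpos, abs_of_nonneg hδpos.le]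
        have hp1' : p.1 ∈ Icc (m 0) (m k) := by
          constructor
          · have := hmono' 0 (j:ℕ) (by omega) (by omega); linarith [hp1.1]
          · have := hmono' ((j:ℕ)+1) k (by omega) (le_refl k); linarith [hp1.2]
        have := htop p.1 hp1' p.2 hy
        rw [Prod.mk.eta] at this
        linarith [hpU']
      · -- sides
        have hy : |p.2| ≤ δ := abs_le.2 ⟨hp2.1, hp2.2⟩
        rcases hp1 with e | e
        · have := hside (j:ℕ) (by omega) p.2 hy
          rw [← e] at this
          rw [Prod.mk.eta] at this
          linarith [hpU']
        · have := hside ((j:ℕ)+1) (by omega) p.2 hy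
          rw [← e] at this
          rw [Prod.mk.eta] at this
          linarith [hpU']
    · exact ⟨⟨(hsm j).1, (hsm j).2⟩,
        ⟨show -δ < (0:ℝ) by linarith [hδpos], show (0:ℝ) < δ from hδpos⟩⟩
    · exact hval j
  have key : ∀ a b : Fin k, (a:ℕ) < (b:ℕ) →
      connectedComponentIn U (s a, 0) ≠ connectedComponentIn U (s b, 0) := by
    intro a b hab heq
    have hsaU : (s a, (0:ℝ)) ∈ U := hval a
    have hmem : (s a, (0:ℝ)) ∈ connectedComponentIn U (s b, 0) := by
      rw [← heq]
      exact mem_connectedComponentIn hsaU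
    have := (hbox b hmem).1.1
    have h1 : s a < m ((a:ℕ)+1) := (hsm a).2
    have h2 : m ((a:ℕ)+1) ≤ m (b:ℕ) := hmono' _ _ (by omega) (by omega : (b:ℕ) ≤ k)
    simp only at this
    linarith
  refine ⟨fun j => ⟨hmem1 j, hval j⟩, ?_⟩
  intro j j' hne
  have hvne : (j:ℕ) ≠ (j':ℕ) := fun e => hne (Fin.ext e)
  rcases Nat.lt_or_ge (j:ℕ) (j':ℕ) with h' | h'
  · exact key j j' h'
  · exact (key j' j (by omega)).symm
end
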